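/- arXiv:2101.06093 — 4 statements merged into one kernel-verified Lean document; each statement's English description precedes it below -/
import Mathlib

section
/- Let 0 < a < b < ∞, 0 < c < d < ∞, p, q > -1 and α, β > 0. If f : [a,b] × [c,d] → ℝ is continuous, then its mixed Katugampola fractional integral I f is continuous on [a,b] × [c,d]. -/
open MeasureTheory Set Filter
open scoped Classical

/-- Mixed (left-hand sided) Katugampola fractional integral of a bivariate function. -/
noncomputable def mixedKI (a c p q α β : ℝ) (f : ℝ → ℝ → ℝ) (x y : ℝ) : ℝ :=
  ((p + 1) ^ (1 - α) * (q + 1) ^ (1 - β) / (Real.Gamma α * Real.Gamma β)) *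
    ∫ s in a..x, ∫ t in c..y,
      (x ^ (p + 1) - s ^ (p + 1)) ^ (α - 1) * (y ^ (q + 1) - t ^ (q + 1)) ^ (β - 1)
        * s ^ p * t ^ q * f s t

/-- Univariate Katugampola fractional integral. -/
noncomputable def KI (a p α : ℝ) (g : ℝ → ℝ) (x : ℝ) : ℝ :=
  ((p + 1) ^ (1 - α) / Real.Gamma α) *
    ∫ t in a..x, (x ^ (p + 1) - t ^ (p + 1)) ^ (α - 1) * t ^ p * g t

/-- Bounded variation in the sense of Arzelà on `[a,b] × [c,d]`. -/
def ArzelaBV (a b c d : ℝ) (f : ℝ → ℝ → ℝ) : Prop :=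
  ∃ M > 0, ∀ (m : ℕ) (x y : ℕ → ℝ),
    x 0 = a → x m = b → y 0 = c → y m = d →
    (∀ i < m, x i ≤ x (i + 1)) → (∀ i < m, y i ≤ y (i + 1)) →
    ∑ i ∈ Finset.range m, |f (x (i + 1)) (y (i + 1)) - f (x i) (y i)| ≤ M

/-- A bounded bivariate function, monotone (nondecreasing) in each variable on the rectangle. -/
def MonotoneRect (a b c d : ℝ) (g : ℝ → ℝ → ℝ) : Prop :=
  (∃ M : ℝ, ∀ x ∈ Icc a b, ∀ y ∈ Icc c d, |g x y| ≤ M) ∧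
  (∀ x ∈ Icc a b, ∀ x' ∈ Icc a b, x ≤ x' → ∀ y ∈ Icc c d, g x y ≤ g x' y) ∧
  (∀ y ∈ Icc c d, ∀ y' ∈ Icc c d, y ≤ y' → ∀ x ∈ Icc a b, g x y ≤ g x y')

/-- Graph of a bivariate function over the rectangle `[a,b] × [c,d]`, as a subset of `ℝ³`. -/
def graphRect (a b c d : ℝ) (f : ℝ → ℝ → ℝ) : Set (ℝ × ℝ × ℝ) :=
  {p | p.1 ∈ Icc a b ∧ p.2.1 ∈ Icc c d ∧ p.2.2 = f p.1 p.2.1}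

/-- A cube of the standard `δ`-mesh of `ℝ³`. -/
def meshCube (δ : ℝ) (i j k : ℤ) : Set (ℝ × ℝ × ℝ) :=
  Icc (i * δ) ((i + 1) * δ) ×ˢ Icc (j * δ) ((j + 1) * δ) ×ˢ Icc (k * δ) ((k + 1) * δ)

/-- Number of `δ`-mesh cubes of `ℝ³` that intersect `S`. -/
noncomputable def meshCount (δ : ℝ) (S : Set (ℝ × ℝ × ℝ)) : ℕ :=
  Nat.card {p : ℤ × ℤ × ℤ | (meshCube δ p.1 p.2.1 p.2.2 ∩ S).Nonempty}

/-- Upper box (Minkowski) dimension of a subset of `ℝ³`. -/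
noncomputable def upperBoxDim (S : Set (ℝ × ℝ × ℝ)) : ℝ :=
  limsup (fun δ : ℝ => Real.log (meshCount δ S) / (-Real.log δ)) (nhdsWithin 0 (Ioi 0))

/-- Lower box (Minkowski) dimension of a subset of `ℝ³`. -/
noncomputable def lowerBoxDim (S : Set (ℝ × ℝ × ℝ)) : ℝ :=
  liminf (fun δ : ℝ => Real.log (meshCount δ S) / (-Real.log δ)) (nhdsWithin 0 (Ioi 0))

/-- Maximum range of `f` over a subset `A` of the plane. -/
noncomputable def Rf (f : ℝ → ℝ → ℝ) (A : Set (ℝ × ℝ)) : ℝ :=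
  sSup {r | ∃ p ∈ A, ∃ q ∈ A, r = |f p.1 p.2 - f q.1 q.2|}

/-- The `(i,j)`-th sub-rectangle of the `m × n` uniform partition of `[a,b] × [c,d]`. -/
def subRect (a b c d : ℝ) (m n : ℕ) (i j : ℕ) : Set (ℝ × ℝ) :=
  Icc (a + ((i : ℝ) - 1) * (b - a) / m) (a + (i : ℝ) * (b - a) / m) ×ˢ
    Icc (c + ((j : ℝ) - 1) * (d - c) / n) (c + (j : ℝ) * (d - c) / n)

/-- The sequence `a₀ = a`, `aₙ = a + (b-a)/2 + ⋯ + (b-a)/2ⁿ = b - (b-a)/2ⁿ`. -/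
noncomputable def aseq (a b : ℝ) (n : ℕ) : ℝ := b - (b - a) / 2 ^ n

/-- The affine map `ψₙ : [aₙ₋₁, aₙ] → [a₀, a₁]`. -/
noncomputable def psiN (a b : ℝ) (n : ℕ) (x : ℝ) : ℝ :=
  2 ^ n * ((aseq a b 1 - aseq a b 0) * x + aseq a b 0 * aseq a b n
    - aseq a b 1 * aseq a b (n - 1)) / (b - a)

/-- The function `Fₙ(x,y) = (1/n) φ(ψₙ(x), y) + ((n-1)/n) φ(a₀, y)` (for `n = 1` this is `φ`). -/
noncomputable def Fseq (a b : ℝ) (φ : ℝ → ℝ → ℝ) (n : ℕ) (x y : ℝ) : ℝ :=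
  (1 / (n : ℝ)) * φ (psiN a b n x) y + (((n : ℝ) - 1) / (n : ℝ)) * φ (aseq a b 0) y


noncomputable def phiK (a p x σ : ℝ) : ℝ :=
  (a ^ (p + 1) + σ * (x ^ (p + 1) - a ^ (p + 1))) ^ (p + 1)⁻¹

lemma phiK_base_pos {a p x σ : ℝ} (ha : 0 < a) (hp : -1 < p) (hax : a ≤ x) (hσ : 0 ≤ σ) :
    0 < a ^ (p + 1) + σ * (x ^ (p + 1) - a ^ (p + 1)) := by
  have hp1 : (0:ℝ) < p + 1 := by linarith
  have hΔ : 0 ≤ x ^ (p + 1) - a ^ (p + 1) :=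
    sub_nonneg.2 (Real.rpow_le_rpow ha.le hax hp1.le)
  have := Real.rpow_pos_of_pos ha (p + 1)
  nlinarith [mul_nonneg hσ hΔ]

lemma phiK_mem {a b p x σ : ℝ} (ha : 0 < a) (hp : -1 < p) (hx : x ∈ Icc a b)
    (hσ : σ ∈ Icc (0:ℝ) 1) : phiK a p x σ ∈ Icc a x := by
  have hp1 : (0:ℝ) < p + 1 := by linarith
  have hxpos : 0 < x := lt_of_lt_of_le ha hx.1
  have hΔ : 0 ≤ x ^ (p + 1) - a ^ (p + 1) :=
    sub_nonneg.2 (Real.rpow_le_rpow ha.le hx.1 hp1.le)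
  have h1 : a ^ (p + 1) ≤ a ^ (p + 1) + σ * (x ^ (p + 1) - a ^ (p + 1)) :=
    le_add_of_nonneg_right (mul_nonneg hσ.1 hΔ)
  have h2 : a ^ (p + 1) + σ * (x ^ (p + 1) - a ^ (p + 1)) ≤ x ^ (p + 1) := by
    nlinarith [mul_le_of_le_one_left hΔ hσ.2]
  constructor
  · calc a = (a ^ (p + 1)) ^ (p + 1)⁻¹ := (Real.rpow_rpow_inv ha.le hp1.ne').symm
      _ ≤ _ := Real.rpow_le_rpow (Real.rpow_nonneg ha.le _) h1 (inv_nonneg.2 hp1.le)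
  · calc phiK a p x σ ≤ (x ^ (p + 1)) ^ (p + 1)⁻¹ :=
        Real.rpow_le_rpow (le_trans (Real.rpow_nonneg ha.le _) h1) h2 (inv_nonneg.2 hp1.le)
      _ = x := Real.rpow_rpow_inv hxpos.le hp1.ne'

lemma pow_diff_lower {a x p : ℝ} (ha : 0 < a) (hax : a ≤ x) (hp : -1 < p) :
    ∃ m : ℝ, 0 < m ∧ ∀ s ∈ Icc a x, m * (x - s) ≤ x ^ (p + 1) - s ^ (p + 1) := by
  have hp1 : (0:ℝ) < p + 1 := by linarith
  have hxpos : 0 < x := lt_of_lt_of_le ha hax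
  refine ⟨(p + 1) * min (a ^ p) (x ^ p), by positivity, ?_⟩
  set m := (p + 1) * min (a ^ p) (x ^ p) with hm
  have hmono : MonotoneOn (fun u : ℝ => u ^ (p + 1) - m * u) (Icc a x) := by
    apply monotoneOn_of_deriv_nonneg (convex_Icc a x)
    · exact ((continuousOn_id.rpow_const fun u hu => Or.inl (ha.trans_le hu.1).ne').sub
        (continuousOn_const.mul continuousOn_id))
    · intro u hu
      rw [interior_Icc] at hu
      have hupos : 0 < u := ha.trans hu.1
      exact (((Real.hasDerivAt_rpow_const (Or.inl hupos.ne')).sub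
        ((hasDerivAt_id u).const_mul m)).differentiableAt).differentiableWithinAt
    · intro u hu
      rw [interior_Icc] at hu
      have hupos : 0 < u := ha.trans hu.1
      have hd : HasDerivAt (fun u : ℝ => u ^ (p + 1) - m * u)
          ((p + 1) * u ^ (p + 1 - 1) - m * 1) u :=
        (Real.hasDerivAt_rpow_const (Or.inl hupos.ne')).sub ((hasDerivAt_id u).const_mul m)
      rw [hd.deriv]
      have hmin : min (a ^ p) (x ^ p) ≤ u ^ p := by
        rcases le_total 0 p with hp0 | hp0
        · exact le_trans (min_le_left _ _) (Real.rpow_le_rpow ha.le hu.1.le hp0)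
        · exact le_trans (min_le_right _ _) (Real.rpow_le_rpow_of_nonpos hupos hu.2.le hp0)
      have : m ≤ (p + 1) * u ^ p := by
        rw [hm]; exact mul_le_mul_of_nonneg_left hmin hp1.le
      have hexp : p + 1 - 1 = p := by ring
      rw [hexp]; linarith
  intro s hs
  have := hmono hs (right_mem_Icc.2 hax) hs.2
  simp only at this
  nlinarith [mul_sub m x s]

lemma gcontIoo {a x p α : ℝ} (ha : 0 < a) (hp : -1 < p) {F : ℝ → ℝ}
    (hF : ContinuousOn F (Icc a x)) :
    ContinuousOn (fun s => (x ^ (p + 1) - s ^ (p + 1)) ^ (α - 1) * (s ^ p * F s)) (Ioo a x) := by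
  have hp1 : (0:ℝ) < p + 1 := by linarith
  have hker : ContinuousOn (fun s : ℝ => (x ^ (p + 1) - s ^ (p + 1)) ^ (α - 1)) (Ioo a x) := by
    apply ContinuousOn.rpow_const
    · exact continuousOn_const.sub
        (continuousOn_id.rpow_const fun s hs => Or.inl (ha.trans hs.1).ne')
    · intro s hs
      have : s ^ (p + 1) < x ^ (p + 1) :=
        Real.rpow_lt_rpow (ha.trans hs.1).le hs.2 hp1
      exact Or.inl (sub_pos.2 this).ne'
  exact hker.mul
    ((continuousOn_id.rpow_const fun s hs => Or.inl (ha.trans hs.1).ne').mul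
      (hF.mono Ioo_subset_Icc_self))

lemma kernel_integrable {a x p α : ℝ} (ha : 0 < a) (hax : a ≤ x) (hp : -1 < p) (hα : 0 < α)
    {F : ℝ → ℝ} (hF : ContinuousOn F (Icc a x)) :
    IntervalIntegrable (fun s => (x ^ (p + 1) - s ^ (p + 1)) ^ (α - 1) * (s ^ p * F s))
      volume a x := by
  have hp1 : (0:ℝ) < p + 1 := by linarith
  rcases eq_or_lt_of_le hax with rfl | hax'
  · exact IntervalIntegrable.refl
  rw [intervalIntegrable_iff_integrableOn_Ioc_of_le hax]
  have hIoo : IntegrableOn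
      (fun s => (x ^ (p + 1) - s ^ (p + 1)) ^ (α - 1) * (s ^ p * F s)) (Ioo a x) volume := by
    have hmeas := (gcontIoo ha hp hF (α := α)).aestronglyMeasurable (μ := volume) measurableSet_Ioo
    obtain ⟨K, hK⟩ := isCompact_Icc.exists_bound_of_continuousOn
      ((continuousOn_id.rpow_const (p := p) fun s hs => Or.inl (ha.trans_le hs.1).ne').mul hF)
    have hK0 : 0 ≤ K := le_trans (norm_nonneg _) (hK a (left_mem_Icc.2 hax))
    obtain ⟨m, hm, hmle⟩ := pow_diff_lower ha hax hp
    have hbase : ∀ s ∈ Ioo a x, 0 < x ^ (p + 1) - s ^ (p + 1) := fun s hs =>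
      sub_pos.2 (Real.rpow_lt_rpow (ha.trans hs.1).le hs.2 hp1)
    rcases le_or_gt α 1 with hα1 | hα1
    · -- singular case
      have hint : IntervalIntegrable (fun s : ℝ => (x - s) ^ (α - 1)) volume a x := by
        have := (intervalIntegral.intervalIntegrable_rpow' (a := x - a) (b := 0) (by linarith : (-1:ℝ) < α - 1))
        simpa using this.comp_sub_left x
      have hbint : IntegrableOn (fun s : ℝ => m ^ (α - 1) * K * (x - s) ^ (α - 1))
          (Ioo a x) volume := by
        have h2 := (hint.const_mul (m ^ (α - 1) * K))
        rw [intervalIntegrable_iff_integrableOn_Ioc_of_le hax] at h2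
        exact h2.mono_set Ioo_subset_Ioc_self
      apply Integrable.mono' hbint hmeas
      rw [ae_restrict_iff' measurableSet_Ioo]
      refine ae_of_all _ fun s hs => ?_
      have hsIcc : s ∈ Icc a x := Ioo_subset_Icc_self hs
      have hker : (x ^ (p + 1) - s ^ (p + 1)) ^ (α - 1) ≤ m ^ (α - 1) * (x - s) ^ (α - 1) := by
        have h1 : (0:ℝ) < m * (x - s) := mul_pos hm (sub_pos.2 hs.2)
        calc (x ^ (p + 1) - s ^ (p + 1)) ^ (α - 1) ≤ (m * (x - s)) ^ (α - 1) :=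
              Real.rpow_le_rpow_of_nonpos h1 (hmle s hsIcc) (by linarith)
          _ = m ^ (α - 1) * (x - s) ^ (α - 1) := Real.mul_rpow hm.le (by linarith [hs.2])
      rw [norm_mul]
      have e1 : ‖(x ^ (p + 1) - s ^ (p + 1)) ^ (α - 1)‖ = (x ^ (p + 1) - s ^ (p + 1)) ^ (α - 1) :=
        Real.norm_of_nonneg (Real.rpow_nonneg (hbase s hs).le _)
      rw [e1]
      have e2 : ‖s ^ p * F s‖ ≤ K := hK s hsIcc
      have h4 : (x ^ (p + 1) - s ^ (p + 1)) ^ (α - 1) * ‖s ^ p * F s‖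
          ≤ (m ^ (α - 1) * (x - s) ^ (α - 1)) * K :=
        mul_le_mul hker e2 (norm_nonneg _)
          (mul_nonneg (Real.rpow_nonneg hm.le _) (Real.rpow_nonneg (by linarith [hs.2]) _))
      have h5 : (m ^ (α - 1) * (x - s) ^ (α - 1)) * K
          = m ^ (α - 1) * K * (x - s) ^ (α - 1) := by ring
      linarith
    · -- bounded case
      have hbint : IntegrableOn
          (fun _ : ℝ => (x ^ (p + 1) - a ^ (p + 1)) ^ (α - 1) * K) (Ioo a x) volume := by
        exact integrableOn_const measure_Ioo_lt_top.ne
      apply Integrable.mono' hbint hmeas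
      rw [ae_restrict_iff' measurableSet_Ioo]
      refine ae_of_all _ fun s hs => ?_
      have hsIcc : s ∈ Icc a x := Ioo_subset_Icc_self hs
      have hker : (x ^ (p + 1) - s ^ (p + 1)) ^ (α - 1)
          ≤ (x ^ (p + 1) - a ^ (p + 1)) ^ (α - 1) := by
        apply Real.rpow_le_rpow (hbase s hs).le _ (by linarith)
        have := Real.rpow_le_rpow ha.le hs.1.le hp1.le
        linarith
      rw [norm_mul]
      have e1 : ‖(x ^ (p + 1) - s ^ (p + 1)) ^ (α - 1)‖ = (x ^ (p + 1) - s ^ (p + 1)) ^ (α - 1) :=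
        Real.norm_of_nonneg (Real.rpow_nonneg (hbase s hs).le _)
      rw [e1]
      exact mul_le_mul hker (hK s hsIcc) (norm_nonneg _)
        (Real.rpow_nonneg (by nlinarith [Real.rpow_le_rpow ha.le hax hp1.le]) _)
  exact hIoo.congr_set_ae Ioo_ae_eq_Ioc.symm

lemma subst_lemma {a x p α : ℝ} (ha : 0 < a) (hax : a ≤ x) (hp : -1 < p) (hα : 0 < α)
    {F : ℝ → ℝ} (hF : ContinuousOn F (Icc a x)) :
    ∫ s in a..x, (x ^ (p + 1) - s ^ (p + 1)) ^ (α - 1) * (s ^ p * F s)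
      = ((x ^ (p + 1) - a ^ (p + 1)) ^ α / (p + 1))
        * ∫ σ in (0:ℝ)..1, (1 - σ) ^ (α - 1) * F (phiK a p x σ) := by
  have hp1 : (0:ℝ) < p + 1 := by linarith
  rcases eq_or_lt_of_le hax with rfl | hax'
  · simp [Real.zero_rpow hα.ne']
  have hxpos : 0 < x := ha.trans hax'
  set A := a ^ (p + 1) with hA
  set X := x ^ (p + 1) with hX
  have hΔ : 0 < X - A := sub_pos.2 (Real.rpow_lt_rpow ha.le hax' hp1)
  set Δ := X - A with hΔdef
  set c : ℝ := (p + 1)⁻¹ with hc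
  have hcpos : 0 < c := inv_pos.2 hp1
  set φ : ℝ → ℝ := phiK a p x with hφ
  set φ' : ℝ → ℝ := fun σ => Δ * c * (A + σ * Δ) ^ (c - 1) with hφ'
  set g : ℝ → ℝ := fun s => (X - s ^ (p + 1)) ^ (α - 1) * (s ^ p * F s) with hg
  have hbase : ∀ σ : ℝ, 0 ≤ σ → 0 < A + σ * Δ := fun σ hσ =>
    phiK_base_pos ha hp hax hσ
  have hφpow : ∀ σ : ℝ, 0 ≤ σ → (φ σ) ^ (p + 1) = A + σ * Δ := fun σ hσ =>
    Real.rpow_inv_rpow (hbase σ hσ).le hp1.ne'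
  have hφ0 : φ 0 = a := by
    show phiK a p x 0 = a
    unfold phiK
    rw [zero_mul, add_zero, Real.rpow_rpow_inv ha.le hp1.ne']
  have hφ1 : φ 1 = x := by
    show phiK a p x 1 = x
    unfold phiK
    rw [one_mul, add_sub_cancel, Real.rpow_rpow_inv hxpos.le hp1.ne']
  have huIcc : Set.uIcc (0:ℝ) 1 = Icc 0 1 := uIcc_of_le zero_le_one
  have hmin : min (0:ℝ) 1 = 0 := min_eq_left zero_le_one
  have hmax : max (0:ℝ) 1 = 1 := max_eq_right zero_le_one
  -- continuity of φ on [0,1]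
  have hφcont : ContinuousOn φ (Icc 0 1) := by
    show ContinuousOn (fun σ => (A + σ * Δ) ^ (p + 1)⁻¹) (Icc 0 1)
    exact (continuousOn_const.add (continuousOn_id.mul continuousOn_const)).rpow_const
      fun σ hσ => Or.inl (hbase σ hσ.1).ne'
  -- derivative
  have hφderiv : ∀ σ ∈ Ioo (0:ℝ) 1, HasDerivAt φ (φ' σ) σ := by
    intro σ hσ
    have hd : HasDerivAt (fun σ : ℝ => A + σ * Δ) Δ σ := by
      simpa using ((hasDerivAt_id σ).mul_const Δ).const_add A
    have := hd.rpow_const (p := c) (Or.inl (hbase σ hσ.1.le).ne')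
    exact this.congr_deriv (by rw [hφ'])
  -- image facts
  have hmemIcc : ∀ σ ∈ Icc (0:ℝ) 1, φ σ ∈ Icc a x := fun σ hσ =>
    phiK_mem ha hp (right_mem_Icc.mpr hax) hσ
  have hφeq : ∀ σ : ℝ, φ σ = (A + σ * Δ) ^ c := fun σ => rfl
  have himg1 : φ '' Ioo 0 1 ⊆ Ioo a x := by
    rintro _ ⟨σ, hσ, rfl⟩
    have h1 : A < A + σ * Δ := by nlinarith [hσ.1, hσ.2]
    have h2 : A + σ * Δ < X := by nlinarith [hσ.1, hσ.2]
    have hApos : 0 < A := Real.rpow_pos_of_pos ha _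
    constructor
    · calc a = A ^ c := (Real.rpow_rpow_inv ha.le hp1.ne').symm
        _ < (A + σ * Δ) ^ c := Real.rpow_lt_rpow hApos.le h1 hcpos
    · calc φ σ = (A + σ * Δ) ^ c := hφeq σ
        _ < X ^ c := Real.rpow_lt_rpow (by linarith) h2 hcpos
        _ = x := Real.rpow_rpow_inv hxpos.le hp1.ne'
  have himg2 : φ '' Icc 0 1 ⊆ Icc a x := by
    rintro _ ⟨σ, hσ, rfl⟩; exact hmemIcc σ hσ
  have hgIoo : ContinuousOn g (Ioo a x) := gcontIoo ha hp hF
  have hgint : IntervalIntegrable g volume a x := kernel_integrable ha hax hp hα hF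
  have hnice : IntervalIntegrable
      (fun σ : ℝ => (1 - σ) ^ (α - 1) * (Δ ^ α / (p + 1) * F (φ σ))) volume 0 1 := by
    have h1 : IntervalIntegrable (fun σ : ℝ => (1 - σ) ^ (α - 1)) volume 0 1 := by
      simpa using (intervalIntegral.intervalIntegrable_rpow' (a := (1:ℝ)) (b := 0)
        (by linarith : (-1:ℝ) < α - 1)).comp_sub_left 1
    apply h1.mul_continuousOn
    rw [huIcc]
    exact continuousOn_const.mul (hF.comp hφcont hmemIcc)
  have hkey : ∀ σ ∈ Icc (0:ℝ) 1,
      φ' σ • g (φ σ) = (1 - σ) ^ (α - 1) * (Δ ^ α / (p + 1) * F (φ σ)) := by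
    intro σ hσ
    have hB := hbase σ hσ.1
    have e1 : (φ σ) ^ (p + 1) = A + σ * Δ := hφpow σ hσ.1
    have e2 : X - (A + σ * Δ) = (1 - σ) * Δ := by rw [hΔdef]; ring
    have e3 : (φ σ) ^ p = (A + σ * Δ) ^ (c * p) := by
      rw [hφeq σ]; exact (Real.rpow_mul hB.le c p).symm
    have e4 : (A + σ * Δ) ^ (c - 1) * (A + σ * Δ) ^ (c * p) = 1 := by
      rw [← Real.rpow_add hB]
      have h0 : c - 1 + c * p = 0 := by rw [hc]; field_simp; ring
      rw [h0, Real.rpow_zero]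
    have e5 : Δ * Δ ^ (α - 1) = Δ ^ α := by
      have h := Real.rpow_add hΔ 1 (α - 1)
      rw [Real.rpow_one] at h
      rw [← h]; norm_num
    have e6 : ((1 - σ) * Δ) ^ (α - 1) = (1 - σ) ^ (α - 1) * Δ ^ (α - 1) :=
      Real.mul_rpow (by linarith [hσ.2]) hΔ.le
    show φ' σ * ((X - (φ σ) ^ (p + 1)) ^ (α - 1) * ((φ σ) ^ p * F (φ σ))) = _
    rw [e1, e2, e3, e6, hφ']
    have hre : Δ * c * (A + σ * Δ) ^ (c - 1) *
        ((1 - σ) ^ (α - 1) * Δ ^ (α - 1) * ((A + σ * Δ) ^ (c * p) * F (φ σ)))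
        = ((A + σ * Δ) ^ (c - 1) * (A + σ * Δ) ^ (c * p)) *
          ((1 - σ) ^ (α - 1) * ((Δ * Δ ^ (α - 1)) * c * F (φ σ))) := by ring
    rw [hre, e4, one_mul, e5, hc]
    rw [div_eq_mul_inv]
  have Hf : ContinuousOn φ (Set.uIcc (0:ℝ) 1) := by rw [huIcc]; exact hφcont
  have Hff' : ∀ σ ∈ Ioo (min (0:ℝ) 1) (max (0:ℝ) 1), HasDerivWithinAt φ (φ' σ) (Ioi σ) σ := by
    rw [min_eq_left zero_le_one, max_eq_right zero_le_one]
    exact fun σ hσ => (hφderiv σ hσ).hasDerivWithinAt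
  have Hgc : ContinuousOn g (φ '' Ioo (min (0:ℝ) 1) (max (0:ℝ) 1)) := by
    rw [min_eq_left zero_le_one, max_eq_right zero_le_one]
    exact hgIoo.mono himg1
  have Hg1 : IntegrableOn g (φ '' Set.uIcc (0:ℝ) 1) volume := by
    have hIcc : IntegrableOn g (Icc a x) volume := by
      rw [integrableOn_Icc_iff_integrableOn_Ioc]
      rw [intervalIntegrable_iff_integrableOn_Ioc_of_le hax] at hgint
      exact hgint
    rw [huIcc]
    exact hIcc.mono_set himg2
  have Hg2 : IntegrableOn (fun σ => φ' σ • (g ∘ φ) σ) (Set.uIcc (0:ℝ) 1) volume := by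
    rw [huIcc]
    have hniceIcc : IntegrableOn
        (fun σ : ℝ => (1 - σ) ^ (α - 1) * (Δ ^ α / (p + 1) * F (φ σ))) (Icc 0 1) volume := by
      rw [integrableOn_Icc_iff_integrableOn_Ioc]
      rw [intervalIntegrable_iff_integrableOn_Ioc_of_le zero_le_one] at hnice
      exact hnice
    exact hniceIcc.congr_fun (fun σ hσ => (hkey σ hσ).symm) measurableSet_Icc
  have hsub := intervalIntegral.integral_comp_smul_deriv''' Hf Hff' Hgc Hg1 Hg2
  rw [hφ0, hφ1] at hsub
  have hEq : EqOn (fun σ : ℝ => φ' σ • (g ∘ φ) σ)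
      (fun σ : ℝ => (Δ ^ α / (p + 1)) * ((1 - σ) ^ (α - 1) * F (φ σ))) (Set.uIcc 0 1) := by
    rw [huIcc]
    intro σ hσ
    simp only [Function.comp]
    rw [hkey σ hσ]
    ring
  rw [← hsub, intervalIntegral.integral_congr hEq, intervalIntegral.integral_const_mul]

lemma phiK_joint_cont {a b p : ℝ} (ha : 0 < a) (hp : -1 < p) :
    ContinuousOn (fun q : ℝ × ℝ => phiK a p q.1 q.2) (Icc a b ×ˢ Icc (0:ℝ) 1) := by
  have hp1 : (0:ℝ) < p + 1 := by linarith
  have hbase : ContinuousOn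
      (fun q : ℝ × ℝ => a ^ (p + 1) + q.2 * (q.1 ^ (p + 1) - a ^ (p + 1)))
      (Icc a b ×ˢ Icc (0:ℝ) 1) := by
    apply continuousOn_const.add
    apply continuousOn_snd.mul
    exact (continuousOn_fst.rpow_const fun q hq =>
      Or.inl (ha.trans_le hq.1.1).ne').sub continuousOn_const
  apply hbase.rpow_const
  intro q hq
  exact Or.inl (phiK_base_pos ha hp hq.1.1 hq.2.1).ne'

lemma cont_param {a b p α : ℝ} (ha : 0 < a) (hab : a ≤ b) (hp : -1 < p) (hα : 0 < α)
    {S : Set ℝ} (hS : IsCompact S) {K : ℝ → ℝ → ℝ}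
    (hK : ContinuousOn (fun r : ℝ × ℝ => K r.1 r.2) (Icc a b ×ˢ S)) :
    ContinuousOn
      (fun r : ℝ × ℝ => ∫ σ in (0:ℝ)..1, (1 - σ) ^ (α - 1) * K (phiK a p r.1 σ) r.2)
      (Icc a b ×ˢ S) := by
  have hp1 : (0:ℝ) < p + 1 := by linarith
  set R := Icc a b ×ˢ S with hR
  obtain ⟨C, hC⟩ := (isCompact_Icc.prod hS).exists_bound_of_continuousOn hK
  set M := max C 0 with hM
  have hMC : ∀ r ∈ R, ‖K r.1 r.2‖ ≤ M := fun r hr => le_trans (hC r hr) (le_max_left _ _)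
  have hphimem : ∀ x ∈ Icc a b, ∀ σ ∈ Icc (0:ℝ) 1, phiK a p x σ ∈ Icc a b := by
    intro x hx σ hσ
    have := phiK_mem ha hp hx hσ
    exact ⟨this.1, this.2.trans hx.2⟩
  have hphic := phiK_joint_cont (b := b) ha hp
  -- rewrite interval integral as set integral
  have hrw : (fun r : ℝ × ℝ => ∫ σ in (0:ℝ)..1, (1 - σ) ^ (α - 1) * K (phiK a p r.1 σ) r.2)
      = fun r : ℝ × ℝ => ∫ σ in Ioc (0:ℝ) 1, (1 - σ) ^ (α - 1) * K (phiK a p r.1 σ) r.2 :=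
    funext fun r => intervalIntegral.integral_of_le zero_le_one
  rw [hrw]
  intro r₀ hr₀
  apply continuousWithinAt_of_dominated (bound := fun σ => M * (1 - σ) ^ (α - 1))
  · -- measurability
    filter_upwards [self_mem_nhdsWithin] with r hr
    rw [← Measure.restrict_congr_set Ioo_ae_eq_Ioc]
    apply ContinuousOn.aestronglyMeasurable _ measurableSet_Ioo
    apply ContinuousOn.mul
    · exact (continuousOn_const.sub continuousOn_id).rpow_const
        fun σ hσ => Or.inl (by linarith [hσ.2] : (0:ℝ) < 1 - σ).ne'
    · have hcomp : ContinuousOn (fun σ : ℝ => (phiK a p r.1 σ, r.2)) (Icc 0 1) := by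
        apply ContinuousOn.prodMk _ continuousOn_const
        exact hphic.comp (continuousOn_const.prodMk continuousOn_id)
          fun σ hσ => ⟨hr.1, hσ⟩
      exact (hK.comp hcomp fun σ hσ => ⟨hphimem r.1 hr.1 σ hσ, hr.2⟩).mono Ioo_subset_Icc_self
  · -- bound
    filter_upwards [self_mem_nhdsWithin] with r hr
    rw [ae_restrict_iff' measurableSet_Ioc]
    refine ae_of_all _ fun σ hσ => ?_
    have hσ' : σ ∈ Icc (0:ℝ) 1 := Ioc_subset_Icc_self hσ
    rw [norm_mul]
    have e1 : ‖(1 - σ) ^ (α - 1)‖ = (1 - σ) ^ (α - 1) :=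
      Real.norm_of_nonneg (Real.rpow_nonneg (by linarith [hσ'.2]) _)
    rw [e1, mul_comm M ((1 - σ) ^ (α - 1))]
    apply mul_le_mul_of_nonneg_left _ (Real.rpow_nonneg (by linarith [hσ'.2]) _)
    exact hMC (phiK a p r.1 σ, r.2) ⟨hphimem r.1 hr.1 σ hσ', hr.2⟩
  · -- bound integrable
    have h1 : IntervalIntegrable (fun σ : ℝ => (1 - σ) ^ (α - 1)) volume 0 1 := by
      simpa using (intervalIntegral.intervalIntegrable_rpow' (a := (1:ℝ)) (b := 0)
        (by linarith : (-1:ℝ) < α - 1)).comp_sub_left 1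
    have h2 := h1.const_mul M
    rw [intervalIntegrable_iff_integrableOn_Ioc_of_le zero_le_one] at h2
    exact h2
  · -- continuity in r for a.e. σ
    rw [ae_restrict_iff' measurableSet_Ioc]
    refine ae_of_all _ fun σ hσ => ?_
    have hσ' : σ ∈ Icc (0:ℝ) 1 := Ioc_subset_Icc_self hσ
    apply ContinuousWithinAt.mul continuousWithinAt_const
    have hcomp : ContinuousOn (fun r : ℝ × ℝ => (phiK a p r.1 σ, r.2)) R := by
      apply ContinuousOn.prodMk _ continuousOn_snd
      exact hphic.comp (continuousOn_fst.prodMk continuousOn_const)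
        fun r hr => ⟨hr.1, hσ'⟩
    exact (hK.comp hcomp fun r hr => ⟨hphimem r.1 hr.1 σ hσ', hr.2⟩) r₀ hr₀


/-- continuity of the mixed Katugampola fractional integral. -/
theorem mixedKI_continuous (a b c d p q α β : ℝ)
    (ha : 0 < a) (hab : a < b) (hc : 0 < c) (hcd : c < d)
    (hp : -1 < p) (hq : -1 < q) (hα : 0 < α) (hβ : 0 < β)
    (f : ℝ → ℝ → ℝ)
    (hf : ContinuousOn (fun pt : ℝ × ℝ => f pt.1 pt.2) (Icc a b ×ˢ Icc c d)) :
    ContinuousOn (fun pt : ℝ × ℝ => mixedKI a c p q α β f pt.1 pt.2)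
      (Icc a b ×ˢ Icc c d) := by
  have hp1 : (0:ℝ) < p + 1 := by linarith
  have hq1 : (0:ℝ) < q + 1 := by linarith
  set Q : ℝ → ℝ → ℝ := fun u v => ∫ τ in (0:ℝ)..1, (1 - τ) ^ (β - 1) * f u (phiK c q v τ)
    with hQdef
  -- continuity of Q (swapped)
  have hKswap : ContinuousOn (fun r : ℝ × ℝ => f r.2 r.1) (Icc c d ×ˢ Icc a b) := by
    exact hf.comp (continuousOn_snd.prodMk continuousOn_fst) fun r hr => ⟨hr.2, hr.1⟩
  have hQ1 : ContinuousOn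
      (fun r : ℝ × ℝ => ∫ τ in (0:ℝ)..1, (1 - τ) ^ (β - 1) * f r.2 (phiK c q r.1 τ))
      (Icc c d ×ˢ Icc a b) :=
    cont_param hc hcd.le hq hβ isCompact_Icc (K := fun t u => f u t) hKswap
  have hQ : ContinuousOn (fun r : ℝ × ℝ => Q r.1 r.2) (Icc a b ×ˢ Icc c d) := by
    have := hQ1.comp (continuousOn_snd.prodMk continuousOn_fst)
      (fun r (hr : r ∈ Icc a b ×ˢ Icc c d) => (⟨hr.2, hr.1⟩ : (r.2, r.1) ∈ Icc c d ×ˢ Icc a b))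
    exact this
  -- continuity of the outer integral
  have hOuter : ContinuousOn
      (fun r : ℝ × ℝ => ∫ σ in (0:ℝ)..1, (1 - σ) ^ (α - 1) * Q (phiK a p r.1 σ) r.2)
      (Icc a b ×ˢ Icc c d) :=
    cont_param ha hab.le hp hα isCompact_Icc (K := Q) hQ
  -- continuity of the prefactors
  have hXc : ContinuousOn (fun r : ℝ × ℝ => (r.1 ^ (p + 1) - a ^ (p + 1)) ^ α)
      (Icc a b ×ˢ Icc c d) := by
    apply ContinuousOn.rpow_const
    · exact (continuousOn_fst.rpow_const fun r hr =>
        Or.inl (ha.trans_le hr.1.1).ne').sub continuousOn_const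
    · exact fun r hr => Or.inr hα.le
  have hYc : ContinuousOn (fun r : ℝ × ℝ => (r.2 ^ (q + 1) - c ^ (q + 1)) ^ β)
      (Icc a b ×ˢ Icc c d) := by
    apply ContinuousOn.rpow_const
    · exact (continuousOn_snd.rpow_const fun r hr =>
        Or.inl (hc.trans_le hr.2.1).ne').sub continuousOn_const
    · exact fun r hr => Or.inr hβ.le
  -- the nice function
  set N : ℝ × ℝ → ℝ := fun r =>
    ((p + 1) ^ (1 - α) * (q + 1) ^ (1 - β) / (Real.Gamma α * Real.Gamma β)) *
      ((r.2 ^ (q + 1) - c ^ (q + 1)) ^ β / (q + 1) *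
        ((r.1 ^ (p + 1) - a ^ (p + 1)) ^ α / (p + 1) *
          ∫ σ in (0:ℝ)..1, (1 - σ) ^ (α - 1) * Q (phiK a p r.1 σ) r.2)) with hNdef
  have hN : ContinuousOn N (Icc a b ×ˢ Icc c d) := by
    apply continuousOn_const.mul
    apply ContinuousOn.mul (hYc.div_const _)
    exact ContinuousOn.mul (hXc.div_const _) hOuter
  apply hN.congr
  -- pointwise identity
  rintro ⟨x, y⟩ hxy
  obtain ⟨hx, hy⟩ := hxy
  simp only at hx hy
  show mixedKI a c p q α β f x y = N (x, y)
  have hxa : a ≤ x := hx.1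
  have hyc : c ≤ y := hy.1
  -- step 1 : rewrite the inner integral
  have hstep1 : EqOn
      (fun s => ∫ t in c..y,
        (x ^ (p + 1) - s ^ (p + 1)) ^ (α - 1) * (y ^ (q + 1) - t ^ (q + 1)) ^ (β - 1)
          * s ^ p * t ^ q * f s t)
      (fun s => ((y ^ (q + 1) - c ^ (q + 1)) ^ β / (q + 1)) *
        ((x ^ (p + 1) - s ^ (p + 1)) ^ (α - 1) * (s ^ p * Q s y)))
      (Set.uIcc a x) := by
    intro s hs
    rw [uIcc_of_le hxa] at hs
    have hsab : s ∈ Icc a b := ⟨hs.1, hs.2.trans hx.2⟩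
    have hfs : ContinuousOn (f s) (Icc c y) := by
      have h := ContinuousOn.comp (g := fun pt : ℝ × ℝ => f pt.1 pt.2)
        (f := fun t : ℝ => (s, t)) (s := Icc c y) hf
        (continuousOn_const.prodMk continuousOn_id)
        (fun t ht => ⟨hsab, ht.1, ht.2.trans hy.2⟩)
      exact h
    have hinner : (∫ t in c..y,
        (x ^ (p + 1) - s ^ (p + 1)) ^ (α - 1) * (y ^ (q + 1) - t ^ (q + 1)) ^ (β - 1)
          * s ^ p * t ^ q * f s t)
        = ((x ^ (p + 1) - s ^ (p + 1)) ^ (α - 1) * s ^ p) *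
            ∫ t in c..y, (y ^ (q + 1) - t ^ (q + 1)) ^ (β - 1) * (t ^ q * f s t) := by
      rw [← intervalIntegral.integral_const_mul]
      apply intervalIntegral.integral_congr
      intro t ht
      simp only
      ring
    have hgoal : (∫ t in c..y,
        (x ^ (p + 1) - s ^ (p + 1)) ^ (α - 1) * (y ^ (q + 1) - t ^ (q + 1)) ^ (β - 1)
          * s ^ p * t ^ q * f s t)
        = ((y ^ (q + 1) - c ^ (q + 1)) ^ β / (q + 1)) *
          ((x ^ (p + 1) - s ^ (p + 1)) ^ (α - 1) * (s ^ p * Q s y)) := by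
      rw [hinner, subst_lemma hc hyc hq hβ hfs]
      have hQsy : Q s y = ∫ τ in (0:ℝ)..1, (1 - τ) ^ (β - 1) * f s (phiK c q y τ) := rfl
      rw [hQsy]
      ring
    exact hgoal
  show ((p + 1) ^ (1 - α) * (q + 1) ^ (1 - β) / (Real.Gamma α * Real.Gamma β)) * _ = _
  rw [intervalIntegral.integral_congr hstep1, intervalIntegral.integral_const_mul]
  -- step 2 : outer substitution
  have hQy : ContinuousOn (fun s => Q s y) (Icc a x) := by
    have h := ContinuousOn.comp (g := fun r : ℝ × ℝ => Q r.1 r.2)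
      (f := fun s : ℝ => (s, y)) (s := Icc a x) hQ
      (continuousOn_id.prodMk continuousOn_const)
      (fun s hs => ⟨⟨hs.1, hs.2.trans hx.2⟩, hy⟩)
    exact h
  rw [subst_lemma ha hxa hp hα hQy]
end

section
/- Let f : [a,b] × [c,d] → ℝ be of bounded variation in the sense of Arzelà. (1) If f(a,c) ≥ 0, then there exist monotone functions f₁, f₂ : [a,b] × [c,d] → ℝ such that f = f₁ - f₂, f₁(a,c) ≥ 0 and f₂(a,c) = 0. (2) If f(a,c) < 0, then there exist monotone functions f₁, f₂ : [a,b] × [c,d] → ℝ such that f = f₁ - f₂, f₁(a,c) = 0 and f₂(a,c) > 0. -/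
open MeasureTheory Set Filter
open scoped Classical

def PSums (a c : ℝ) (f : ℝ → ℝ → ℝ) (x y : ℝ) : Set ℝ :=
  {s | ∃ m : ℕ, ∃ u w : ℕ → ℝ, u 0 = a ∧ u m = x ∧ w 0 = c ∧ w m = y ∧
    (∀ i < m, u i ≤ u (i + 1)) ∧ (∀ i < m, w i ≤ w (i + 1)) ∧
    s = ∑ i ∈ Finset.range m, |f (u (i + 1)) (w (i + 1)) - f (u i) (w i)|}

noncomputable def vfun (a c : ℝ) (f : ℝ → ℝ → ℝ) (x y : ℝ) : ℝ := sSup (PSums a c f x y)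

lemma abs_mem_PSums {a c x y : ℝ} (f : ℝ → ℝ → ℝ) (hax : a ≤ x) (hcy : c ≤ y) :
    |f x y - f a c| ∈ PSums a c f x y := by
  refine ⟨1, fun i => if i = 0 then a else x, fun i => if i = 0 then c else y,
    by simp, by simp, by simp, by simp, ?_, ?_, by simp⟩
  · intro i hi
    interval_cases i
    simpa using hax
  · intro i hi
    interval_cases i
    simpa using hcy

lemma extend_PSums {a c x y x' y' s : ℝ} {f : ℝ → ℝ → ℝ}
    (hs : s ∈ PSums a c f x y) (hx : x ≤ x') (hy : y ≤ y') :
    s + |f x' y' - f x y| ∈ PSums a c f x' y' := by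
  obtain ⟨m, u, w, hu0, hum, hw0, hwm, hmu, hmw, hsum⟩ := hs
  refine ⟨m + 1, fun i => if i ≤ m then u i else x', fun i => if i ≤ m then w i else y',
    by simp [hu0], by simp, by simp [hw0], by simp, ?_, ?_, ?_⟩
  · intro i hi
    rcases Nat.lt_or_ge i m with h | h
    · simp only [Nat.le_of_lt h, if_pos, Nat.succ_le_of_lt h]
      exact hmu i h
    · have : i = m := le_antisymm (Nat.lt_succ_iff.mp hi) h
      subst this
      simp [hum, hx]
  · intro i hi
    rcases Nat.lt_or_ge i m with h | h
    · simp only [Nat.le_of_lt h, if_pos, Nat.succ_le_of_lt h]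
      exact hmw i h
    · have : i = m := le_antisymm (Nat.lt_succ_iff.mp hi) h
      subst this
      simp [hwm, hy]
  · rw [Finset.sum_range_succ]
    have h1 : ∑ i ∈ Finset.range m,
        |f (if i + 1 ≤ m then u (i + 1) else x') (if i + 1 ≤ m then w (i + 1) else y')
          - f (if i ≤ m then u i else x') (if i ≤ m then w i else y')|
        = ∑ i ∈ Finset.range m, |f (u (i + 1)) (w (i + 1)) - f (u i) (w i)| := by
      apply Finset.sum_congr rfl
      intro i hi
      have h2 : i + 1 ≤ m := Nat.succ_le_of_lt (Finset.mem_range.mp hi)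
      simp [h2, Nat.le_of_succ_le h2]
    rw [h1, ← hsum]
    simp [hum, hwm]

lemma chain_mono {m : ℕ} {u : ℕ → ℝ} (h : ∀ i < m, u i ≤ u (i + 1)) :
    ∀ i j, i ≤ j → j ≤ m → u i ≤ u j := by
  intro i j hij hjm
  induction j with
  | zero => simp [Nat.le_zero.mp hij]
  | succ n ih =>
    rcases Nat.lt_or_ge i (n + 1) with h1 | h2
    · exact le_trans (ih (Nat.lt_succ_iff.mp h1) (le_trans (Nat.le_succ n) hjm))
        (h n (Nat.lt_of_succ_le hjm))
    · have : i = n + 1 := le_antisymm hij h2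
      simp [this]

lemma PSums_le {a b c d M : ℝ} {f : ℝ → ℝ → ℝ}
    (hM : ∀ (m : ℕ) (x y : ℕ → ℝ), x 0 = a → x m = b → y 0 = c → y m = d →
      (∀ i < m, x i ≤ x (i + 1)) → (∀ i < m, y i ≤ y (i + 1)) →
      ∑ i ∈ Finset.range m, |f (x (i + 1)) (y (i + 1)) - f (x i) (y i)| ≤ M)
    {x y : ℝ} (hxb : x ≤ b) (hyd : y ≤ d) :
    ∀ s ∈ PSums a c f x y, s ≤ M := by
  intro s hs
  obtain ⟨m, u, w, h1, h2, h3, h4, h5, h6, h7⟩ := extend_PSums hs hxb hyd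
  have hle := hM m u w h1 h2 h3 h4 h5 h6
  rw [← h7] at hle
  have := abs_nonneg (f b d - f x y)
  linarith

/-- Jordan-type decomposition of a function of bounded variation
in the sense of Arzelà into monotone functions. -/
theorem arzelaBV_decomposition (a b c d : ℝ) (hab : a ≤ b) (hcd : c ≤ d)
    (f : ℝ → ℝ → ℝ) (hf : ArzelaBV a b c d f) :
    (0 ≤ f a c →
      ∃ f₁ f₂ : ℝ → ℝ → ℝ, MonotoneRect a b c d f₁ ∧ MonotoneRect a b c d f₂ ∧
        (∀ x ∈ Icc a b, ∀ y ∈ Icc c d, f x y = f₁ x y - f₂ x y) ∧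
        0 ≤ f₁ a c ∧ f₂ a c = 0) ∧
    (f a c < 0 →
      ∃ f₁ f₂ : ℝ → ℝ → ℝ, MonotoneRect a b c d f₁ ∧ MonotoneRect a b c d f₂ ∧
        (∀ x ∈ Icc a b, ∀ y ∈ Icc c d, f x y = f₁ x y - f₂ x y) ∧
        f₁ a c = 0 ∧ 0 < f₂ a c) := by
  obtain ⟨M, hM0, hM⟩ := hf
  set v : ℝ → ℝ → ℝ := vfun a c f with hvdef
  have hbdd : ∀ x y : ℝ, x ≤ b → y ≤ d → BddAbove (PSums a c f x y) :=
    fun x y hx hy => ⟨M, fun s hs => PSums_le hM hx hy s hs⟩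
  have hne : ∀ x y : ℝ, a ≤ x → c ≤ y → (PSums a c f x y).Nonempty :=
    fun x y hx hy => ⟨_, abs_mem_PSums f hx hy⟩
  have hstep : ∀ x y x' y' : ℝ, a ≤ x → x ≤ x' → x' ≤ b → c ≤ y → y ≤ y' → y' ≤ d →
      v x y + |f x' y' - f x y| ≤ v x' y' := by
    intro x y x' y' hax hxx hxb hcy hyy hyd
    have h1 : v x y ≤ v x' y' - |f x' y' - f x y| := by
      apply csSup_le (hne x y hax hcy)
      intro s hs
      have h2 : s + |f x' y' - f x y| ≤ v x' y' :=
        le_csSup (hbdd x' y' hxb hyd) (extend_PSums hs hxx hyy)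
      linarith
    linarith
  have hvac : v a c = 0 := by
    have hset : PSums a c f a c = {0} := by
      ext s
      constructor
      · rintro ⟨m, u, w, hu0, hum, hw0, hwm, hmu, hmw, rfl⟩
        have hui : ∀ i ≤ m, u i = a := by
          intro i hi
          have h1 : u i ≤ a := hum ▸ chain_mono hmu i m hi le_rfl
          have h2 : a ≤ u i := hu0 ▸ chain_mono hmu 0 i (Nat.zero_le i) hi
          linarith
        have hwi : ∀ i ≤ m, w i = c := by
          intro i hi
          have h1 : w i ≤ c := hwm ▸ chain_mono hmw i m hi le_rfl
          have h2 : c ≤ w i := hw0 ▸ chain_mono hmw 0 i (Nat.zero_le i) hi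
          linarith
        have : ∑ i ∈ Finset.range m, |f (u (i + 1)) (w (i + 1)) - f (u i) (w i)| = 0 := by
          apply Finset.sum_eq_zero
          intro i hi
          have h1 : i < m := Finset.mem_range.mp hi
          rw [hui i h1.le, hui (i + 1) (Nat.succ_le_of_lt h1),
            hwi i h1.le, hwi (i + 1) (Nat.succ_le_of_lt h1)]
          simp
        simp [this]
      · rintro rfl
        exact ⟨0, fun _ => a, fun _ => c, rfl, rfl, rfl, rfl,
          by intro i hi; omega, by intro i hi; omega, by simp⟩
    rw [hvdef]
    show sSup (PSums a c f a c) = 0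
    rw [hset, csSup_singleton]
  have hv0 : ∀ x ∈ Icc a b, ∀ y ∈ Icc c d, 0 ≤ v x y := by
    intro x hx y hy
    have := hstep a c x y le_rfl hx.1 hx.2 le_rfl hy.1 hy.2
    have := abs_nonneg (f x y - f a c)
    linarith
  have hvabs : ∀ x ∈ Icc a b, ∀ y ∈ Icc c d, |f x y - f a c| ≤ v x y := by
    intro x hx y hy
    have := hstep a c x y le_rfl hx.1 hx.2 le_rfl hy.1 hy.2
    linarith
  have hvM : ∀ x ∈ Icc a b, ∀ y ∈ Icc c d, v x y ≤ M := by
    intro x hx y hy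
    exact csSup_le (hne x y hx.1 hy.1) (PSums_le hM hx.2 hy.2)
  have hfbd : ∀ x ∈ Icc a b, ∀ y ∈ Icc c d, |f x y| ≤ M + |f a c| := by
    intro x hx y hy
    have h1 := hvabs x hx y hy
    have h2 := hvM x hx y hy
    have h3 := abs_sub_abs_le_abs_sub (f x y) (f a c)
    linarith
  -- monotone rect for v + k
  have hmono2 : ∀ k : ℝ, MonotoneRect a b c d (fun x y => v x y + k) := by
    intro k
    refine ⟨⟨M + |k|, ?_⟩, ?_, ?_⟩
    · intro x hx y hy
      have h1 := hv0 x hx y hy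
      have h2 := hvM x hx y hy
      calc |v x y + k| ≤ |v x y| + |k| := abs_add_le _ _
        _ ≤ M + |k| := by rw [abs_of_nonneg h1]; linarith
    · intro x hx x' hx' hxx y hy
      have := hstep x y x' y hx.1 hxx hx'.2 hy.1 le_rfl hy.2
      have := abs_nonneg (f x' y - f x y)
      simp only []
      linarith
    · intro y hy y' hy' hyy x hx
      have := hstep x y x y' hx.1 le_rfl hx.2 hy.1 hyy hy'.2
      have := abs_nonneg (f x y' - f x y)
      simp only []
      linarith
  -- monotone rect for v + f + k
  have hmono1 : ∀ k : ℝ, MonotoneRect a b c d (fun x y => v x y + f x y + k) := by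
    intro k
    refine ⟨⟨M + (M + |f a c|) + |k|, ?_⟩, ?_, ?_⟩
    · intro x hx y hy
      have h1 := hv0 x hx y hy
      have h2 := hvM x hx y hy
      have h3 := hfbd x hx y hy
      calc |v x y + f x y + k| ≤ |v x y + f x y| + |k| := abs_add_le _ _
        _ ≤ |v x y| + |f x y| + |k| := by have := abs_add_le (v x y) (f x y); linarith
        _ ≤ M + (M + |f a c|) + |k| := by rw [abs_of_nonneg h1]; linarith
    · intro x hx x' hx' hxx y hy
      have h1 := hstep x y x' y hx.1 hxx hx'.2 hy.1 le_rfl hy.2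
      have h2 := neg_abs_le (f x' y - f x y)
      simp only []
      linarith
    · intro y hy y' hy' hyy x hx
      have h1 := hstep x y x y' hx.1 le_rfl hx.2 hy.1 hyy hy'.2
      have h2 := neg_abs_le (f x y' - f x y)
      simp only []
      linarith
  constructor
  · intro hfac
    refine ⟨fun x y => v x y + f x y + 0, fun x y => v x y + 0,
      hmono1 0, hmono2 0, fun x hx y hy => by ring, ?_, ?_⟩
    · show 0 ≤ v a c + f a c + 0
      rw [hvac]; linarith
    · show v a c + 0 = 0
      rw [hvac]; ring
  · intro hfac
    refine ⟨fun x y => v x y + f x y + (-(f a c)), fun x y => v x y + (-(f a c)),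
      hmono1 (-(f a c)), hmono2 (-(f a c)), fun x hx y hy => by ring, ?_, ?_⟩
    · show v a c + f a c + -f a c = 0
      rw [hvac]; ring
    · show 0 < v a c + -f a c
      rw [hvac]; linarith
end

section
/- Let 0 < a < b < ∞, 0 < c < d < ∞, p, q > -1 and α, β > 0. If f : [a,b] × [c,d] → ℝ is of bounded variation in the sense of Arzelà, then its mixed Katugampola fractional integral I f is also of bounded variation in the sense of Arzelà on [a,b] × [c,d]. -/
open MeasureTheory Set Filter
open scoped Classical

namespace MKIBV

noncomputable def phiC (a p x r : ℝ) : ℝ :=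
  (a ^ (p+1) + r * (x ^ (p+1) - a ^ (p+1))) ^ (1/(p+1))

lemma meas_rpow_const (c : ℝ) : Measurable (fun u : ℝ => u ^ c) := by measurability

variable {a p α x x' : ℝ}

lemma roundtrip (hz : 0 < a) (hp : -1 < p) : (a ^ (p+1)) ^ (1/(p+1)) = a := by
  rw [← Real.rpow_mul hz.le, mul_one_div, div_self (by linarith : p + 1 ≠ 0), Real.rpow_one]

lemma base_pos (ha : 0 < a) (hp : -1 < p) (hax : a ≤ x) {r : ℝ} (hr : r ∈ Icc (0:ℝ) 1) :
    0 < a ^ (p+1) + r * (x ^ (p+1) - a ^ (p+1)) := by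
  have h1 : 0 < a ^ (p+1) := Real.rpow_pos_of_pos ha _
  have h2 : a ^ (p+1) ≤ x ^ (p+1) := Real.rpow_le_rpow ha.le hax (by linarith)
  nlinarith [hr.1, hr.2]

lemma phiC_mem (ha : 0 < a) (hp : -1 < p) (hax : a ≤ x) {r : ℝ} (hr : r ∈ Icc (0:ℝ) 1) :
    phiC a p x r ∈ Icc a x := by
  have hx : 0 < x := lt_of_lt_of_le ha hax
  have hp1 : (0:ℝ) < p + 1 := by linarith
  have he : (0:ℝ) ≤ 1/(p+1) := (one_div_pos.mpr hp1).le
  have h2 : a ^ (p+1) ≤ x ^ (p+1) := Real.rpow_le_rpow ha.le hax (by linarith)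
  have hb1 : a ^ (p+1) ≤ a ^ (p+1) + r * (x ^ (p+1) - a ^ (p+1)) := by nlinarith [hr.1]
  have hb2 : a ^ (p+1) + r * (x ^ (p+1) - a ^ (p+1)) ≤ x ^ (p+1) := by nlinarith [hr.2]
  have hA : (0:ℝ) ≤ a ^ (p+1) := (Real.rpow_pos_of_pos ha _).le
  constructor
  · calc a = (a ^ (p+1)) ^ (1/(p+1)) := (roundtrip ha hp).symm
    _ ≤ _ := Real.rpow_le_rpow hA hb1 he
  · calc phiC a p x r ≤ (x ^ (p+1)) ^ (1/(p+1)) :=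
        Real.rpow_le_rpow (by linarith) hb2 he
    _ = x := roundtrip hx hp

lemma phiC_mono_x (ha : 0 < a) (hp : -1 < p) (hax : a ≤ x) (hxx : x ≤ x')
    {r : ℝ} (hr : r ∈ Icc (0:ℝ) 1) : phiC a p x r ≤ phiC a p x' r := by
  have hx : 0 < x := lt_of_lt_of_le ha hax
  have h2 : x ^ (p+1) ≤ x' ^ (p+1) := Real.rpow_le_rpow hx.le hxx (by linarith)
  have hp1 : (0:ℝ) < p + 1 := by linarith
  exact Real.rpow_le_rpow (base_pos ha hp hax hr).le (by nlinarith [hr.1]) (one_div_pos.mpr hp1).le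

lemma phiC_deriv (ha : 0 < a) (hp : -1 < p) (hax : a ≤ x) {r : ℝ} (hr : r ∈ Icc (0:ℝ) 1) :
    HasDerivAt (phiC a p x)
      ((1/(p+1) * (a ^ (p+1) + r * (x ^ (p+1) - a ^ (p+1))) ^ (1/(p+1) - 1)) *
        (x ^ (p+1) - a ^ (p+1))) r := by
  have hb := base_pos ha hp hax hr
  have h1 : HasDerivAt (fun r : ℝ => a ^ (p+1) + r * (x ^ (p+1) - a ^ (p+1)))
      (x ^ (p+1) - a ^ (p+1)) r := (hasDerivAt_mul_const _).const_add _
  have h2 := (Real.hasDerivAt_rpow_const (p := 1/(p+1)) (Or.inl hb.ne')).comp r h1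
  exact h2

lemma phiC_image (ha : 0 < a) (hp : -1 < p) (hax : a < x) :
    phiC a p x '' Ioo 0 1 = Ioo a x := by
  have hx : 0 < x := lt_trans ha hax
  have hp1 : (0:ℝ) < p + 1 := by linarith
  have hAX : a ^ (p+1) < x ^ (p+1) := Real.rpow_lt_rpow ha.le hax hp1
  ext t
  constructor
  · rintro ⟨r, hr, rfl⟩
    have hb1 : a ^ (p+1) < a ^ (p+1) + r * (x ^ (p+1) - a ^ (p+1)) := by nlinarith [hr.1]
    have hb2 : a ^ (p+1) + r * (x ^ (p+1) - a ^ (p+1)) < x ^ (p+1) := by nlinarith [hr.2]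
    have hA : (0:ℝ) ≤ a ^ (p+1) := (Real.rpow_pos_of_pos ha _).le
    constructor
    · calc a = (a ^ (p+1)) ^ (1/(p+1)) := (roundtrip ha hp).symm
      _ < _ := Real.rpow_lt_rpow hA hb1 (one_div_pos.mpr hp1)
    · calc phiC a p x r < (x ^ (p+1)) ^ (1/(p+1)) :=
          Real.rpow_lt_rpow (by linarith) hb2 (one_div_pos.mpr hp1)
      _ = x := roundtrip hx hp
  · intro ht
    have ht0 : 0 < t := lt_trans ha ht.1
    have h1 : a ^ (p+1) < t ^ (p+1) := Real.rpow_lt_rpow ha.le ht.1 hp1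
    have h2 : t ^ (p+1) < x ^ (p+1) := Real.rpow_lt_rpow ht0.le ht.2 hp1
    refine ⟨(t ^ (p+1) - a ^ (p+1)) / (x ^ (p+1) - a ^ (p+1)), ⟨div_pos (by linarith) (by linarith), ?_⟩, ?_⟩
    · rw [div_lt_one (by linarith)]; linarith
    · unfold phiC
      rw [div_mul_cancel₀ _ (by linarith : x ^ (p+1) - a ^ (p+1) ≠ 0)]
      have : a ^ (p+1) + (t ^ (p+1) - a ^ (p+1)) = t ^ (p+1) := by ring
      rw [this, roundtrip ht0 hp]

lemma phiC_injOn (ha : 0 < a) (hp : -1 < p) (hax : a < x) : InjOn (phiC a p x) (Ioo 0 1) := by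
  have hAX : a ^ (p+1) < x ^ (p+1) := Real.rpow_lt_rpow ha.le hax (by linarith)
  have : StrictMonoOn (phiC a p x) (Ioo 0 1) := by
    intro r hr s hs hrs
    have hb := base_pos ha hp hax.le (Ioo_subset_Icc_self hr)
    exact Real.rpow_lt_rpow hb.le (by nlinarith) (one_div_pos.mpr (by linarith : (0:ℝ) < p+1))
  exact this.injOn

lemma phiC_derivWithin (ha : 0 < a) (hp : -1 < p) (hax : a ≤ x) :
    ∀ r ∈ Ioo (0:ℝ) 1, HasDerivWithinAt (phiC a p x)
      ((1/(p+1) * (a ^ (p+1) + r * (x ^ (p+1) - a ^ (p+1))) ^ (1/(p+1) - 1)) *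
        (x ^ (p+1) - a ^ (p+1))) (Ioo 0 1) r := fun r hr =>
  (phiC_deriv ha hp hax (Ioo_subset_Icc_self hr)).hasDerivWithinAt

/-- The transformed integrand. -/
noncomputable def trf (a p α x : ℝ) (h : ℝ → ℝ) (r : ℝ) : ℝ :=
  ((x ^ (p+1) - a ^ (p+1)) ^ α / (p+1)) * ((1-r) ^ (α-1) * h (phiC a p x r))

lemma trf_eq (ha : 0 < a) (hp : -1 < p) (hax : a < x) (h : ℝ → ℝ) :
    ∀ r ∈ Ioo (0:ℝ) 1,
      |(1/(p+1) * (a ^ (p+1) + r * (x ^ (p+1) - a ^ (p+1))) ^ (1/(p+1) - 1)) *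
        (x ^ (p+1) - a ^ (p+1))| •
        ((x ^ (p+1) - (phiC a p x r) ^ (p+1)) ^ (α-1) * (phiC a p x r) ^ p * h (phiC a p x r))
      = trf a p α x h r := by
  intro r hr
  have hp1 : (0:ℝ) < p + 1 := by linarith
  have hb := base_pos ha hp hax.le (Ioo_subset_Icc_self hr)
  have hAX : a ^ (p+1) < x ^ (p+1) := Real.rpow_lt_rpow ha.le hax hp1
  set A := a ^ (p+1)
  set X := x ^ (p+1)
  set u := A + r * (X - A) with hu
  -- phi ^ (p+1) = u
  have hphi : phiC a p x r = u ^ (1/(p+1)) := rfl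
  have hup : (phiC a p x r) ^ (p+1) = u := by
    rw [hphi, ← Real.rpow_mul hb.le, one_div, inv_mul_cancel₀ hp1.ne', Real.rpow_one]
  have hphip : (phiC a p x r) ^ p = u ^ (p/(p+1)) := by
    rw [hphi, ← Real.rpow_mul hb.le, one_div, inv_mul_eq_div]
  have hXu : X - u = (1-r) * (X - A) := by rw [hu]; ring
  have hderivpos : 0 < (1/(p+1) * u ^ (1/(p+1) - 1)) * (X - A) := by
    have := Real.rpow_pos_of_pos hb (1/(p+1) - 1)
    have h2 : (0:ℝ) < X - A := by linarith
    positivity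
  rw [abs_of_pos hderivpos, smul_eq_mul, hup, hphip, hXu]
  rw [Real.mul_rpow (by linarith [hr.2] : (0:ℝ) ≤ 1 - r) (by linarith : (0:ℝ) ≤ X - A)]
  have hcomb : u ^ (1/(p+1) - 1) * u ^ (p/(p+1)) = 1 := by
    rw [← Real.rpow_add hb]
    have : 1/(p+1) - 1 + p/(p+1) = 0 := by field_simp; ring
    rw [this, Real.rpow_zero]
  have hXA : (X - A) * (X - A) ^ (α - 1) = (X - A) ^ α := by
    nth_rewrite 1 [← Real.rpow_one (X - A)]
    rw [← Real.rpow_add (by linarith), show (1:ℝ) + (α - 1) = α by ring]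
  simp only [trf]
  linear_combination ((1-r)^(α-1) * h (phiC a p x r) * (X - A) * (X - A)^(α-1) / (p+1)) * hcomb
    + ((1-r)^(α-1) * h (phiC a p x r) / (p+1)) * hXA

/-- The kernel-weighted integrand. -/
noncomputable def KF (a p α x : ℝ) (h : ℝ → ℝ) (t : ℝ) : ℝ :=
  (x ^ (p+1) - t ^ (p+1)) ^ (α-1) * t ^ p * h t

lemma cov (ha : 0 < a) (hp : -1 < p) (hax : a < x) (h : ℝ → ℝ) :
    ∫ t in a..x, KF a p α x h t = ∫ r in Ioo (0:ℝ) 1, trf a p α x h r := by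
  rw [intervalIntegral.integral_of_le hax.le, integral_Ioc_eq_integral_Ioo,
    ← phiC_image ha hp hax,
    integral_image_eq_integral_abs_deriv_smul measurableSet_Ioo
      (phiC_derivWithin ha hp hax.le) (phiC_injOn ha hp hax)]
  exact setIntegral_congr_fun measurableSet_Ioo (fun r hr => trf_eq ha hp hax h r hr)

lemma cov_integrableOn_iff (ha : 0 < a) (hp : -1 < p) (hax : a < x) (h : ℝ → ℝ) :
    IntegrableOn (KF a p α x h) (Ioo a x) ↔ IntegrableOn (trf a p α x h) (Ioo 0 1) := by
  rw [← phiC_image ha hp hax,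
    integrableOn_image_iff_integrableOn_abs_deriv_smul measurableSet_Ioo
      (phiC_derivWithin ha hp hax.le) (phiC_injOn ha hp hax)]
  exact integrableOn_congr_fun (fun r hr => trf_eq ha hp hax h r hr) measurableSet_Ioo

lemma one_sub_rpow_integrable (hα : 0 < α) :
    IntegrableOn (fun r : ℝ => (1-r) ^ (α-1)) (Ioo (0:ℝ) 1) := by
  have h1 : IntervalIntegrable (fun u : ℝ => u ^ (α-1)) volume 0 1 :=
    intervalIntegral.intervalIntegrable_rpow' (by linarith)
  have h2 := h1.comp_sub_left 1
  simp only [sub_zero, sub_self] at h2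
  have h3 : IntegrableOn (fun r : ℝ => (1-r) ^ (α-1)) (uIoc (1:ℝ) 0) := intervalIntegrable_iff.mp h2
  rw [uIoc_of_ge (by norm_num)] at h3
  exact h3.mono_set Ioo_subset_Ioc_self

lemma trf_integrableOn (ha : 0 < a) (hp : -1 < p) (hα : 0 < α) (hax : a < x)
    (h : ℝ → ℝ) (hmono : Monotone h) :
    IntegrableOn (trf a p α x h) (Ioo 0 1) := by
  have hx : 0 < x := lt_trans ha hax
  set B : ℝ := max |h a| |h x| with hB
  have hbd : ∀ r ∈ Ioo (0:ℝ) 1, |h (phiC a p x r)| ≤ B := by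
    intro r hr
    have hm := phiC_mem ha hp hax.le (Ioo_subset_Icc_self hr)
    have h1 : h a ≤ h (phiC a p x r) := hmono hm.1
    have h2 : h (phiC a p x r) ≤ h x := hmono hm.2
    rw [abs_le]
    constructor
    · have := neg_abs_le (h a); have := le_max_left |h a| |h x|; linarith
    · have := le_abs_self (h x); have := le_max_right |h a| |h x|; linarith
  have hB0 : 0 ≤ B := le_trans (abs_nonneg _) (le_max_left _ _)
  have hmeas : AEStronglyMeasurable (trf a p α x h) (volume.restrict (Ioo (0:ℝ) 1)) := by
    apply Measurable.aestronglyMeasurable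
    apply Measurable.const_mul
    apply Measurable.mul
    · exact (meas_rpow_const (α-1)).comp (measurable_const.sub measurable_id)
    · refine hmono.measurable.comp ?_
      exact (meas_rpow_const (1/(p+1))).comp
        ((measurable_id.mul measurable_const).const_add _)
  set c : ℝ := (x ^ (p+1) - a ^ (p+1)) ^ α / (p+1) with hc
  have hc0 : 0 ≤ c := by
    have : (0:ℝ) ≤ (x ^ (p+1) - a ^ (p+1)) ^ α := Real.rpow_nonneg
      (by linarith [Real.rpow_le_rpow ha.le hax.le (by linarith : (0:ℝ) ≤ p+1)]) _
    have hp1 : (0:ℝ) < p+1 := by linarith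
    positivity
  have hdom : Integrable (fun r : ℝ => c * B * (1-r) ^ (α-1)) (volume.restrict (Ioo (0:ℝ) 1)) :=
    ((one_sub_rpow_integrable hα).const_mul (c * B))
  refine hdom.mono hmeas ?_
  filter_upwards [ae_restrict_mem measurableSet_Ioo] with r hr
  have h1r : (0:ℝ) ≤ (1-r) ^ (α-1) := Real.rpow_nonneg (by linarith [hr.2]) _
  simp only [trf, Real.norm_eq_abs]
  rw [abs_of_nonneg (by positivity : (0:ℝ) ≤ c * B * (1-r)^(α-1)), abs_mul, abs_mul,
    abs_of_nonneg hc0, abs_of_nonneg h1r]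
  have := hbd r hr
  calc c * ((1-r)^(α-1) * |h (phiC a p x r)|) ≤ c * ((1-r)^(α-1) * B) := by
        apply mul_le_mul_of_nonneg_left _ hc0
        exact mul_le_mul_of_nonneg_left this h1r
    _ = c * B * (1-r)^(α-1) := by ring

lemma KF_intervalIntegrable (ha : 0 < a) (hp : -1 < p) (hα : 0 < α) (hax : a ≤ x)
    (h : ℝ → ℝ) (hmono : Monotone h) :
    IntervalIntegrable (KF a p α x h) volume a x := by
  rcases eq_or_lt_of_le hax with rfl | hax'
  · simp [intervalIntegrable_iff]
  · rw [intervalIntegrable_iff, uIoc_of_le hax, integrableOn_Ioc_iff_integrableOn_Ioo]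
    exact (cov_integrableOn_iff ha hp hax' h).mpr (trf_integrableOn ha hp hα hax' h hmono)

lemma KF_integral_nonneg (ha : 0 < a) (hp : -1 < p) (hax : a ≤ x)
    (h : ℝ → ℝ) (h0 : ∀ t ∈ Icc a x, 0 ≤ h t) :
    0 ≤ ∫ t in a..x, KF a p α x h t := by
  apply intervalIntegral.integral_nonneg hax
  intro t ht
  have ht0 : 0 < t := lt_of_lt_of_le ha ht.1
  have h1 : t ^ (p+1) ≤ x ^ (p+1) := Real.rpow_le_rpow ht0.le ht.2 (by linarith)
  have h2 : (0:ℝ) ≤ (x ^ (p+1) - t ^ (p+1)) ^ (α-1) := Real.rpow_nonneg (by linarith) _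
  have h3 : (0:ℝ) ≤ t ^ p := (Real.rpow_pos_of_pos ht0 p).le
  exact mul_nonneg (mul_nonneg h2 h3) (h0 t ht)

lemma KF_integral_mono (ha : 0 < a) (hp : -1 < p) (hα : 0 < α)
    (hax : a ≤ x) (hxx : x ≤ x') (h₁ h₂ : ℝ → ℝ)
    (hm1 : Monotone h₁) (hm2 : Monotone h₂)
    (h10 : ∀ t ∈ Icc a x', 0 ≤ h₁ t) (h12 : ∀ t ∈ Icc a x', h₁ t ≤ h₂ t) :
    ∫ t in a..x, KF a p α x h₁ t ≤ ∫ t in a..x', KF a p α x' h₂ t := by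
  have hax' : a ≤ x' := le_trans hax hxx
  have h20 : ∀ t ∈ Icc a x', 0 ≤ h₂ t := fun t ht => le_trans (h10 t ht) (h12 t ht)
  rcases eq_or_lt_of_le hax with rfl | haxlt
  · simp only [intervalIntegral.integral_same]
    exact KF_integral_nonneg ha hp hax' h₂ h20
  · have haxlt' : a < x' := lt_of_lt_of_le haxlt hxx
    rw [cov ha hp haxlt, cov ha hp haxlt']
    apply setIntegral_mono_on (trf_integrableOn ha hp hα haxlt h₁ hm1)
      (trf_integrableOn ha hp hα haxlt' h₂ hm2) measurableSet_Ioo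
    intro r hr
    have hrIcc := Ioo_subset_Icc_self hr
    have hmem := phiC_mem ha hp hax hrIcc
    have hmem' := phiC_mem ha hp hax' hrIcc
    have hphile : phiC a p x r ≤ phiC a p x' r := phiC_mono_x ha hp hax hxx hrIcc
    have hmemx' : phiC a p x r ∈ Icc a x' := ⟨hmem.1, le_trans hmem.2 hxx⟩
    have h1r : (0:ℝ) ≤ (1-r) ^ (α-1) := Real.rpow_nonneg (by linarith [hr.2]) _
    have hp1 : (0:ℝ) < p+1 := by linarith
    have hA0 : (0:ℝ) ≤ x ^ (p+1) - a ^ (p+1) := by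
      linarith [Real.rpow_le_rpow ha.le hax (by linarith : (0:ℝ) ≤ p+1)]
    have hXX' : x ^ (p+1) ≤ x' ^ (p+1) :=
      Real.rpow_le_rpow (lt_of_lt_of_le ha hax).le hxx (by linarith)
    have hA0' : (0:ℝ) ≤ x' ^ (p+1) - a ^ (p+1) := by linarith
    have hcle : (x ^ (p+1) - a ^ (p+1)) ^ α / (p+1) ≤ (x' ^ (p+1) - a ^ (p+1)) ^ α / (p+1) :=
      by
      have h5 : (x ^ (p+1) - a ^ (p+1)) ^ α ≤ (x' ^ (p+1) - a ^ (p+1)) ^ α :=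
        Real.rpow_le_rpow hA0 (by linarith) hα.le
      gcongr
    simp only [trf]
    apply mul_le_mul hcle
    · exact mul_le_mul_of_nonneg_left
        (le_trans (hm1 hphile) (h12 _ hmem')) h1r
    · exact mul_nonneg h1r (h10 _ hmemx')
    · exact div_nonneg (Real.rpow_nonneg hA0' _) hp1.le

lemma integral_one_sub_rpow (hα : 0 < α) :
    ∫ r in Ioo (0:ℝ) 1, (1-r) ^ (α-1) = 1/α := by
  have h1 : ∫ r in (0:ℝ)..1, (1-r) ^ (α-1) = ∫ u in (0:ℝ)..1, u ^ (α-1) := by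
    have := intervalIntegral.integral_comp_sub_left (a := (0:ℝ)) (b := 1)
      (fun u : ℝ => u ^ (α-1)) 1
    simpa using this
  have h2 : ∫ u in (0:ℝ)..1, u ^ (α-1) = 1/α := by
    rw [integral_rpow (Or.inl (by linarith))]
    rw [sub_add_cancel, Real.one_rpow, Real.zero_rpow (by linarith : α ≠ 0)]
    ring
  rw [← integral_Ioc_eq_integral_Ioo, ← intervalIntegral.integral_of_le (by norm_num : (0:ℝ) ≤ 1)]
  rw [h1, h2]

lemma KF_integral_le (ha : 0 < a) (hp : -1 < p) (hα : 0 < α) (hax : a ≤ x)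
    (h : ℝ → ℝ) (hmono : Monotone h) (B : ℝ) (hB0 : 0 ≤ B)
    (hB : ∀ t ∈ Icc a x, h t ≤ B) :
    ∫ t in a..x, KF a p α x h t ≤ (x ^ (p+1) - a ^ (p+1)) ^ α / (p+1) * B * (1/α) := by
  have hp1 : (0:ℝ) < p+1 := by linarith
  rcases eq_or_lt_of_le hax with rfl | haxlt
  · simp only [intervalIntegral.integral_same, sub_self,
      Real.zero_rpow (by linarith : α ≠ 0), zero_div, zero_mul]
    positivity
  · have hA0 : (0:ℝ) ≤ x ^ (p+1) - a ^ (p+1) := by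
      have := Real.rpow_le_rpow ha.le hax (by linarith : (0:ℝ) ≤ p+1)
      linarith
    set c : ℝ := (x ^ (p+1) - a ^ (p+1)) ^ α / (p+1) with hc
    have hc0 : 0 ≤ c := div_nonneg (Real.rpow_nonneg hA0 _) hp1.le
    rw [cov ha hp haxlt]
    have hint2 : IntegrableOn (fun r : ℝ => c * B * (1-r) ^ (α-1)) (Ioo (0:ℝ) 1) :=
      (one_sub_rpow_integrable hα).const_mul (c * B)
    have hle : ∫ r in Ioo (0:ℝ) 1, trf a p α x h r
        ≤ ∫ r in Ioo (0:ℝ) 1, c * B * (1-r) ^ (α-1) := by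
      apply setIntegral_mono_on (trf_integrableOn ha hp hα haxlt h hmono) hint2
        measurableSet_Ioo
      intro r hr
      have h1r : (0:ℝ) ≤ (1-r) ^ (α-1) := Real.rpow_nonneg (by linarith [hr.2]) _
      have hmem := phiC_mem ha hp hax (Ioo_subset_Icc_self hr)
      have : h (phiC a p x r) ≤ B := hB _ hmem
      simp only [trf, ← hc]
      calc c * ((1-r)^(α-1) * h (phiC a p x r)) ≤ c * ((1-r)^(α-1) * B) := by
            apply mul_le_mul_of_nonneg_left _ hc0
            exact mul_le_mul_of_nonneg_left this h1r
        _ = c * B * (1-r)^(α-1) := by ring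
    calc ∫ r in Ioo (0:ℝ) 1, trf a p α x h r ≤ _ := hle
      _ = c * B * ∫ r in Ioo (0:ℝ) 1, (1-r) ^ (α-1) := by
          rw [MeasureTheory.integral_const_mul]
      _ = c * B * (1/α) := by rw [integral_one_sub_rpow hα]

/-! ### Bivariate layer -/

variable {c q β b d y y' : ℝ}

lemma kernel_nonneg (hc : 0 < c) (hq : -1 < q) {y t : ℝ} (ht : t ∈ Icc c y) :
    0 ≤ (y ^ (q+1) - t ^ (q+1)) ^ (β-1) * t ^ q := by
  have ht0 : 0 < t := lt_of_lt_of_le hc ht.1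
  have h1 : t ^ (q+1) ≤ y ^ (q+1) := Real.rpow_le_rpow ht0.le ht.2 (by linarith)
  exact mul_nonneg (Real.rpow_nonneg (by linarith) _) (Real.rpow_pos_of_pos ht0 q).le

/-- Inner integral. -/
noncomputable def Gin (c q β : ℝ) (g : ℝ → ℝ → ℝ) (y s : ℝ) : ℝ :=
  ∫ t in c..y, KF c q β y (g s) t

section Biv

variable (g : ℝ → ℝ → ℝ) {B : ℝ}
variable (hc : 0 < c) (hq : -1 < q) (hβ : 0 < β)
variable (hgm1 : ∀ t, Monotone (fun s => g s t)) (hgm2 : ∀ s, Monotone (g s))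
variable (hg0 : ∀ s t, 0 ≤ g s t) (hgB : ∀ s t, g s t ≤ B)

include hc hq hβ hgm2

include hgm1 in
lemma Gin_mono_s (hcy : c ≤ y) : Monotone (fun s => Gin c q β g y s) := by
  intro s s' hss
  apply intervalIntegral.integral_mono_on hcy
    (KF_intervalIntegrable hc hq hβ hcy (g s) (hgm2 s))
    (KF_intervalIntegrable hc hq hβ hcy (g s') (hgm2 s'))
  intro t ht
  exact mul_le_mul_of_nonneg_left (hgm1 t hss) (kernel_nonneg hc hq ht)

include hg0 in
lemma Gin_nonneg (hcy : c ≤ y) (s : ℝ) : 0 ≤ Gin c q β g y s :=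
  KF_integral_nonneg hc hq hcy (g s) (fun t _ => hg0 s t)

include hg0 in
lemma Gin_mono_y (hcy : c ≤ y) (hyy : y ≤ y') (s : ℝ) :
    Gin c q β g y s ≤ Gin c q β g y' s :=
  KF_integral_mono hc hq hβ hcy hyy (g s) (g s) (hgm2 s) (hgm2 s)
    (fun t _ => hg0 s t) (fun _ _ => le_refl _)

include hg0 hgB in
lemma Gin_le (hcy : c ≤ y) (hyd : y ≤ d) (s : ℝ) :
    Gin c q β g y s ≤ (d ^ (q+1) - c ^ (q+1)) ^ β / (q+1) * B * (1/β) := by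
  have hB0 : 0 ≤ B := le_trans (hg0 s c) (hgB s c)
  have hq1 : (0:ℝ) < q + 1 := by linarith
  have h1 : Gin c q β g y s ≤ (y ^ (q+1) - c ^ (q+1)) ^ β / (q+1) * B * (1/β) :=
    KF_integral_le hc hq hβ hcy (g s) (hgm2 s) B hB0 (fun t _ => hgB s t)
  have h2 : (y ^ (q+1) - c ^ (q+1)) ^ β ≤ (d ^ (q+1) - c ^ (q+1)) ^ β := by
    have hy0 : 0 < y := lt_of_lt_of_le hc hcy
    have hcy' : c ^ (q+1) ≤ y ^ (q+1) := Real.rpow_le_rpow hc.le hcy hq1.le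
    have hyd' : y ^ (q+1) ≤ d ^ (q+1) := Real.rpow_le_rpow hy0.le hyd hq1.le
    exact Real.rpow_le_rpow (by linarith) (by linarith) hβ.le
  calc Gin c q β g y s ≤ _ := h1
    _ ≤ _ := by
        apply mul_le_mul_of_nonneg_right _ (by positivity : (0:ℝ) ≤ 1/β)
        exact mul_le_mul_of_nonneg_right (by gcongr) hB0

end Biv

/-- Outer (double) integral, without the Gamma-constant. -/
noncomputable def Phi (a c p q α β : ℝ) (g : ℝ → ℝ → ℝ) (x y : ℝ) : ℝ :=
  ∫ s in a..x, KF a p α x (Gin c q β g y) s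

section Biv2

variable {a b p α : ℝ} (g : ℝ → ℝ → ℝ) {B : ℝ}
variable (ha : 0 < a) (hp : -1 < p) (hα : 0 < α)
variable (hc : 0 < c) (hq : -1 < q) (hβ : 0 < β)
variable (hgm1 : ∀ t, Monotone (fun s => g s t)) (hgm2 : ∀ s, Monotone (g s))
variable (hg0 : ∀ s t, 0 ≤ g s t) (hgB : ∀ s t, g s t ≤ B)

include ha hp hα hc hq hβ hgm1 hgm2 hg0

lemma Phi_mono_x (hax : a ≤ x) (hxx : x ≤ x') (hcy : c ≤ y) :
    Phi a c p q α β g x y ≤ Phi a c p q α β g x' y :=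
  KF_integral_mono ha hp hα hax hxx _ _
    (Gin_mono_s g hc hq hβ hgm1 hgm2 hcy) (Gin_mono_s g hc hq hβ hgm1 hgm2 hcy)
    (fun s _ => Gin_nonneg g hc hq hβ hgm2 hg0 hcy s) (fun _ _ => le_refl _)

lemma Phi_mono_y (hax : a ≤ x) (hcy : c ≤ y) (hyy : y ≤ y') :
    Phi a c p q α β g x y ≤ Phi a c p q α β g x y' :=
  KF_integral_mono ha hp hα hax (le_refl x) _ _
    (Gin_mono_s g hc hq hβ hgm1 hgm2 hcy)
    (Gin_mono_s g hc hq hβ hgm1 hgm2 (le_trans hcy hyy))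
    (fun s _ => Gin_nonneg g hc hq hβ hgm2 hg0 hcy s)
    (fun s _ => Gin_mono_y g hc hq hβ hgm2 hg0 hcy hyy s)

lemma Phi_nonneg (hax : a ≤ x) (hcy : c ≤ y) : 0 ≤ Phi a c p q α β g x y :=
  KF_integral_nonneg ha hp hax _ (fun s _ => Gin_nonneg g hc hq hβ hgm2 hg0 hcy s)

include hgB in
lemma Phi_le (hax : a ≤ x) (hxb : x ≤ b) (hcy : c ≤ y) (hyd : y ≤ d) :
    Phi a c p q α β g x y ≤
      ((b ^ (p+1) - a ^ (p+1)) ^ α / (p+1) * ((d ^ (q+1) - c ^ (q+1)) ^ β / (q+1) * B * (1/β))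
        * (1/α)) := by
  set B2 : ℝ := (d ^ (q+1) - c ^ (q+1)) ^ β / (q+1) * B * (1/β) with hB2
  have hB20 : 0 ≤ B2 := le_trans (Gin_nonneg g hc hq hβ hgm2 hg0 hcy a)
    (Gin_le g hc hq hβ hgm2 hg0 hgB hcy hyd a)
  have h1 : Phi a c p q α β g x y ≤ (x ^ (p+1) - a ^ (p+1)) ^ α / (p+1) * B2 * (1/α) :=
    KF_integral_le ha hp hα hax _ (Gin_mono_s g hc hq hβ hgm1 hgm2 hcy) B2 hB20
      (fun s _ => Gin_le g hc hq hβ hgm2 hg0 hgB hcy hyd s)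
  have hp1 : (0:ℝ) < p+1 := by linarith
  have hx0 : 0 < x := lt_of_lt_of_le ha hax
  have h2 : (x ^ (p+1) - a ^ (p+1)) ^ α ≤ (b ^ (p+1) - a ^ (p+1)) ^ α := by
    have h3 : a ^ (p+1) ≤ x ^ (p+1) := Real.rpow_le_rpow ha.le hax hp1.le
    have h4 : x ^ (p+1) ≤ b ^ (p+1) := Real.rpow_le_rpow hx0.le hxb hp1.le
    exact Real.rpow_le_rpow (by linarith) (by linarith) hα.le
  calc Phi a c p q α β g x y ≤ _ := h1
    _ ≤ _ := by
        apply mul_le_mul_of_nonneg_right _ (by positivity : (0:ℝ) ≤ 1/α)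
        exact mul_le_mul_of_nonneg_right (by gcongr) hB20

end Biv2

section Split

variable {a b p α : ℝ} (f g h : ℝ → ℝ → ℝ)
variable (ha : 0 < a) (hp : -1 < p) (hα : 0 < α)
variable (hc : 0 < c) (hq : -1 < q) (hβ : 0 < β)
variable (hgm1 : ∀ t, Monotone (fun s => g s t)) (hgm2 : ∀ s, Monotone (g s))
variable (hhm1 : ∀ t, Monotone (fun s => h s t)) (hhm2 : ∀ s, Monotone (h s))
variable (hsplit : ∀ s ∈ Icc a b, ∀ t ∈ Icc c d, f s t = g s t - h s t)

include ha hp hα hc hq hβ hgm1 hgm2 hhm1 hhm2 hsplit in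
lemma double_split (hax : a ≤ x) (hxb : x ≤ b) (hcy : c ≤ y) (hyd : y ≤ d) :
    (∫ s in a..x, ∫ t in c..y,
        (x ^ (p + 1) - s ^ (p + 1)) ^ (α - 1) * (y ^ (q + 1) - t ^ (q + 1)) ^ (β - 1)
          * s ^ p * t ^ q * f s t)
      = Phi a c p q α β g x y - Phi a c p q α β h x y := by
  have hIccx : uIcc a x ⊆ Icc a b := by
    rw [uIcc_of_le hax]; exact Icc_subset_Icc (le_refl a) hxb
  have hIccy : uIcc c y ⊆ Icc c d := by
    rw [uIcc_of_le hcy]; exact Icc_subset_Icc (le_refl c) hyd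
  have step1 : ∀ s ∈ Icc a b,
      (∫ t in c..y,
        (x ^ (p + 1) - s ^ (p + 1)) ^ (α - 1) * (y ^ (q + 1) - t ^ (q + 1)) ^ (β - 1)
          * s ^ p * t ^ q * f s t)
      = KF a p α x (Gin c q β g y) s - KF a p α x (Gin c q β h y) s := by
    intro s hs
    have e1 : (∫ t in c..y,
        (x ^ (p + 1) - s ^ (p + 1)) ^ (α - 1) * (y ^ (q + 1) - t ^ (q + 1)) ^ (β - 1)
          * s ^ p * t ^ q * f s t)
        = ((x ^ (p + 1) - s ^ (p + 1)) ^ (α - 1) * s ^ p) * ∫ t in c..y, KF c q β y (f s) t := by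
      rw [← intervalIntegral.integral_const_mul]
      apply intervalIntegral.integral_congr
      intro t _
      simp only [KF]; ring
    have e2 : (∫ t in c..y, KF c q β y (f s) t)
        = Gin c q β g y s - Gin c q β h y s := by
      have e3 : ∫ t in c..y, KF c q β y (f s) t
          = ∫ t in c..y, (KF c q β y (g s) t - KF c q β y (h s) t) := by
        apply intervalIntegral.integral_congr
        intro t ht
        simp only [KF, hsplit s hs t (hIccy ht)]; ring
      rw [e3, intervalIntegral.integral_sub
        (KF_intervalIntegrable hc hq hβ hcy (g s) (hgm2 s))
        (KF_intervalIntegrable hc hq hβ hcy (h s) (hhm2 s))]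
      rfl
    rw [e1, e2, KF, KF]; ring
  have step2 : (∫ s in a..x, ∫ t in c..y,
        (x ^ (p + 1) - s ^ (p + 1)) ^ (α - 1) * (y ^ (q + 1) - t ^ (q + 1)) ^ (β - 1)
          * s ^ p * t ^ q * f s t)
      = ∫ s in a..x, (KF a p α x (Gin c q β g y) s - KF a p α x (Gin c q β h y) s) := by
    apply intervalIntegral.integral_congr
    intro s hs
    exact step1 s (hIccx hs)
  rw [step2, intervalIntegral.integral_sub
    (KF_intervalIntegrable ha hp hα hax _ (Gin_mono_s g hc hq hβ hgm1 hgm2 hcy))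
    (KF_intervalIntegrable ha hp hα hax _ (Gin_mono_s h hc hq hβ hhm1 hhm2 hcy))]
  rfl

end Split

/-! ### Arzelà variation and Jordan-type decomposition -/

def chainSums (a c : ℝ) (f : ℝ → ℝ → ℝ) (x y : ℝ) : Set ℝ :=
  {r | ∃ m : ℕ, ∃ u w : ℕ → ℝ, u 0 = a ∧ u m = x ∧ w 0 = c ∧ w m = y ∧
    (∀ i < m, u i ≤ u (i+1)) ∧ (∀ i < m, w i ≤ w (i+1)) ∧
    r = ∑ i ∈ Finset.range m, |f (u (i+1)) (w (i+1)) - f (u i) (w i)|}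

noncomputable def Vf (a c : ℝ) (f : ℝ → ℝ → ℝ) (x y : ℝ) : ℝ := sSup (chainSums a c f x y)

section Var

variable {a b c d : ℝ} {f : ℝ → ℝ → ℝ} {M : ℝ}

lemma chain_extend {x y x' y' r : ℝ} (hr : r ∈ chainSums a c f x y)
    (hxx : x ≤ x') (hyy : y ≤ y') :
    r + |f x' y' - f x y| ∈ chainSums a c f x' y' := by
  classical
  obtain ⟨m, u, w, hu0, hum, hw0, hwm, humo, hwmo, hrsum⟩ := hr
  set u' : ℕ → ℝ := fun i => if i ≤ m then u i else x' with hu'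
  set w' : ℕ → ℝ := fun i => if i ≤ m then w i else y' with hw'
  have hu'eq : ∀ i, i ≤ m → u' i = u i := fun i hi => by simp [hu', hi]
  have hw'eq : ∀ i, i ≤ m → w' i = w i := fun i hi => by simp [hw', hi]
  have hu'top : u' (m+1) = x' := by simp [hu']
  have hw'top : w' (m+1) = y' := by simp [hw']
  refine ⟨m+1, u', w', ?_, hu'top, ?_, hw'top, ?_, ?_, ?_⟩
  · rw [hu'eq 0 (Nat.zero_le m)]; exact hu0
  · rw [hw'eq 0 (Nat.zero_le m)]; exact hw0
  · intro i hi
    rcases Nat.lt_or_ge i m with h | h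
    · rw [hu'eq i (by omega), hu'eq (i+1) (by omega)]; exact humo i h
    · have him : i = m := by omega
      rw [him, hu'eq m (le_refl m), hu'top, hum]; exact hxx
  · intro i hi
    rcases Nat.lt_or_ge i m with h | h
    · rw [hw'eq i (by omega), hw'eq (i+1) (by omega)]; exact hwmo i h
    · have him : i = m := by omega
      rw [him, hw'eq m (le_refl m), hw'top, hwm]; exact hyy
  · rw [Finset.sum_range_succ]
    have hcong : ∀ i ∈ Finset.range m,
        |f (u' (i+1)) (w' (i+1)) - f (u' i) (w' i)|
          = |f (u (i+1)) (w (i+1)) - f (u i) (w i)| := by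
      intro i hi
      rw [Finset.mem_range] at hi
      rw [hu'eq i (by omega), hu'eq (i+1) (by omega),
        hw'eq i (by omega), hw'eq (i+1) (by omega)]
    rw [Finset.sum_congr rfl hcong, ← hrsum,
      hu'eq m (le_refl m), hw'eq m (le_refl m), hu'top, hw'top, hum, hwm]

lemma chain_self {x y : ℝ} (hax : a ≤ x) (hcy : c ≤ y) :
    |f x y - f a c| ∈ chainSums a c f x y := by
  refine ⟨1, (fun i => if i = 0 then a else x), (fun i => if i = 0 then c else y),
    by simp, by simp, by simp, by simp, ?_, ?_, ?_⟩
  · intro i hi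
    have : i = 0 := by omega
    subst this; simpa using hax
  · intro i hi
    have : i = 0 := by omega
    subst this; simpa using hcy
  · simp

variable (hM : ∀ (m : ℕ) (x y : ℕ → ℝ),
    x 0 = a → x m = b → y 0 = c → y m = d →
    (∀ i < m, x i ≤ x (i + 1)) → (∀ i < m, y i ≤ y (i + 1)) →
    ∑ i ∈ Finset.range m, |f (x (i + 1)) (y (i + 1)) - f (x i) (y i)| ≤ M)

include hM

lemma chainSums_le {x y r : ℝ} (hxb : x ≤ b) (hyd : y ≤ d)
    (hr : r ∈ chainSums a c f x y) : r ≤ M := by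
  have h1 := chain_extend hr hxb hyd
  obtain ⟨m, u, w, hu0, hum, hw0, hwm, humo, hwmo, hrsum⟩ := h1
  have := hM m u w hu0 hum hw0 hwm humo hwmo
  rw [← hrsum] at this
  have h2 : (0:ℝ) ≤ |f b d - f x y| := abs_nonneg _
  linarith

lemma Vf_bddAbove {x y : ℝ} (hxb : x ≤ b) (hyd : y ≤ d) :
    BddAbove (chainSums a c f x y) :=
  ⟨M, fun r hr => chainSums_le hM hxb hyd hr⟩

lemma Vf_nonneg {x y : ℝ} (hax : a ≤ x) (hxb : x ≤ b) (hcy : c ≤ y) (hyd : y ≤ d) :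
    0 ≤ Vf a c f x y :=
  le_trans (abs_nonneg _) (le_csSup (Vf_bddAbove hM hxb hyd) (chain_self hax hcy))

lemma Vf_le {x y : ℝ} (hax : a ≤ x) (hxb : x ≤ b) (hcy : c ≤ y) (hyd : y ≤ d) :
    Vf a c f x y ≤ M :=
  csSup_le ⟨_, chain_self hax hcy⟩ (fun r hr => chainSums_le hM hxb hyd hr)

lemma Vf_step {x y x' y' : ℝ} (hax : a ≤ x) (hxx : x ≤ x') (hxb : x' ≤ b)
    (hcy : c ≤ y) (hyy : y ≤ y') (hyd : y' ≤ d) :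
    Vf a c f x y + |f x' y' - f x y| ≤ Vf a c f x' y' := by
  have h1 : Vf a c f x y ≤ Vf a c f x' y' - |f x' y' - f x y| := by
    apply csSup_le ⟨_, chain_self hax hcy⟩
    intro r hr
    have h2 := le_csSup (Vf_bddAbove (f := f) (M := M) hM hxb hyd)
      (chain_extend hr hxx hyy)
    have h3 : Vf a c f x' y' = sSup (chainSums a c f x' y') := rfl
    rw [h3]
    linarith
  linarith

lemma fdiff_le {x y : ℝ} (hax : a ≤ x) (hxb : x ≤ b) (hcy : c ≤ y) (hyd : y ≤ d) :
    |f x y - f a c| ≤ M :=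
  chainSums_le hM hxb hyd (chain_self hax hcy)

end Var

/-- Chain monotonicity helper. -/
lemma chain_le {m : ℕ} {x : ℕ → ℝ} (hmono : ∀ i < m, x i ≤ x (i+1)) :
    ∀ j, j ≤ m → ∀ i, i ≤ j → x i ≤ x j := by
  intro j
  induction j with
  | zero =>
      intro _ i hi
      have : i = 0 := by omega
      rw [this]
  | succ k ih =>
      intro hkm i hi
      rcases Nat.lt_or_ge i (k+1) with h | h
      · exact le_trans (ih (by omega) i (by omega)) (hmono k (by omega))
      · have : i = k + 1 := by omega
        rw [this]

lemma chain_mem {m : ℕ} {x : ℕ → ℝ} {a b : ℝ} (h0 : x 0 = a) (hm : x m = b)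
    (hmono : ∀ i < m, x i ≤ x (i+1)) : ∀ i, i ≤ m → x i ∈ Icc a b := by
  intro i hi
  constructor
  · rw [← h0]; exact chain_le hmono i hi 0 (Nat.zero_le i)
  · rw [← hm]; exact chain_le hmono m (le_refl m) i hi

end MKIBV


set_option maxHeartbeats 2000000 in
/-- the mixed Katugampola fractional integral preserves bounded
variation in the sense of Arzelà. -/
theorem mixedKI_arzelaBV (a b c d p q α β : ℝ)
    (ha : 0 < a) (hab : a < b) (hc : 0 < c) (hcd : c < d)
    (hp : -1 < p) (hq : -1 < q) (hα : 0 < α) (hβ : 0 < β)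
    (f : ℝ → ℝ → ℝ) (hf : ArzelaBV a b c d f) :
    ArzelaBV a b c d (fun x y => mixedKI a c p q α β f x y) := by
  classical
  obtain ⟨M, hM0, hMsum⟩ := hf
  set Kb : ℝ := M + |f a c| with hKb
  have hKb0 : 0 ≤ Kb := by have := abs_nonneg (f a c); simp [hKb]; linarith
  set cl1 : ℝ → ℝ := fun s => max a (min s b) with hcl1
  set cl2 : ℝ → ℝ := fun t => max c (min t d) with hcl2
  have hcl1mem : ∀ s, cl1 s ∈ Icc a b :=
    fun s => ⟨le_max_left _ _, max_le hab.le (min_le_right _ _)⟩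
  have hcl2mem : ∀ t, cl2 t ∈ Icc c d :=
    fun t => ⟨le_max_left _ _, max_le hcd.le (min_le_right _ _)⟩
  have hcl1mono : Monotone cl1 := fun s s' hss => by
    simp only [hcl1]
    exact max_le_max (le_refl a) (min_le_min hss (le_refl b))
  have hcl2mono : Monotone cl2 := fun t t' htt => by
    simp only [hcl2]
    exact max_le_max (le_refl c) (min_le_min htt (le_refl d))
  have hcl1id : ∀ s ∈ Icc a b, cl1 s = s := fun s hs => by
    simp only [hcl1]; rw [min_eq_left hs.2, max_eq_right hs.1]
  have hcl2id : ∀ t ∈ Icc c d, cl2 t = t := fun t ht => by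
    simp only [hcl2]; rw [min_eq_left ht.2, max_eq_right ht.1]
  set g : ℝ → ℝ → ℝ := fun s t => MKIBV.Vf a c f (cl1 s) (cl2 t) + Kb with hgdef
  set h : ℝ → ℝ → ℝ :=
    fun s t => MKIBV.Vf a c f (cl1 s) (cl2 t) - f (cl1 s) (cl2 t) + Kb with hhdef
  set B : ℝ := M + 2 * Kb with hB
  -- monotonicity and bounds for g and h
  have hgm1 : ∀ t, Monotone (fun s => g s t) := by
    intro t s s' hss
    simp only [hgdef]
    have := MKIBV.Vf_step hMsum (hcl1mem s).1 (hcl1mono hss) (hcl1mem s').2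
      (hcl2mem t).1 (le_refl _) (hcl2mem t).2
    have h2 := abs_nonneg (f (cl1 s') (cl2 t) - f (cl1 s) (cl2 t))
    linarith
  have hgm2 : ∀ s, Monotone (g s) := by
    intro s t t' htt
    simp only [hgdef]
    have := MKIBV.Vf_step hMsum (hcl1mem s).1 (le_refl _) (hcl1mem s).2
      (hcl2mem t).1 (hcl2mono htt) (hcl2mem t').2
    have h2 := abs_nonneg (f (cl1 s) (cl2 t') - f (cl1 s) (cl2 t))
    linarith
  have hhm1 : ∀ t, Monotone (fun s => h s t) := by
    intro t s s' hss
    simp only [hhdef]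
    have := MKIBV.Vf_step hMsum (hcl1mem s).1 (hcl1mono hss) (hcl1mem s').2
      (hcl2mem t).1 (le_refl _) (hcl2mem t).2
    have h2 := le_abs_self (f (cl1 s') (cl2 t) - f (cl1 s) (cl2 t))
    linarith
  have hhm2 : ∀ s, Monotone (h s) := by
    intro s t t' htt
    simp only [hhdef]
    have := MKIBV.Vf_step hMsum (hcl1mem s).1 (le_refl _) (hcl1mem s).2
      (hcl2mem t).1 (hcl2mono htt) (hcl2mem t').2
    have h2 := le_abs_self (f (cl1 s) (cl2 t') - f (cl1 s) (cl2 t))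
    linarith
  have hVnn : ∀ s t, 0 ≤ MKIBV.Vf a c f (cl1 s) (cl2 t) := fun s t =>
    MKIBV.Vf_nonneg hMsum (hcl1mem s).1 (hcl1mem s).2 (hcl2mem t).1 (hcl2mem t).2
  have hVle : ∀ s t, MKIBV.Vf a c f (cl1 s) (cl2 t) ≤ M := fun s t =>
    MKIBV.Vf_le hMsum (hcl1mem s).1 (hcl1mem s).2 (hcl2mem t).1 (hcl2mem t).2
  have hfd : ∀ s t, |f (cl1 s) (cl2 t) - f a c| ≤ M := fun s t =>
    MKIBV.fdiff_le hMsum (hcl1mem s).1 (hcl1mem s).2 (hcl2mem t).1 (hcl2mem t).2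
  have hg0 : ∀ s t, 0 ≤ g s t := fun s t => by
    simp only [hgdef]; have := hVnn s t; linarith
  have hgB : ∀ s t, g s t ≤ B := fun s t => by
    simp only [hgdef, hB]; have := hVle s t; linarith
  have hh0 : ∀ s t, 0 ≤ h s t := fun s t => by
    simp only [hhdef]
    have h1 := hVnn s t
    have h2 : f (cl1 s) (cl2 t) - f a c ≤ M := le_trans (le_abs_self _) (hfd s t)
    have h3 := le_abs_self (f a c)
    simp only [hKb] at *
    linarith
  have hhB : ∀ s t, h s t ≤ B := fun s t => by
    simp only [hhdef, hB]
    have h1 := hVle s t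
    have h2 : f a c - f (cl1 s) (cl2 t) ≤ M := by
      have := neg_abs_le (f (cl1 s) (cl2 t) - f a c)
      have := hfd s t
      linarith
    have h3 := neg_abs_le (f a c)
    simp only [hKb] at *
    linarith
  have hsplit : ∀ s ∈ Icc a b, ∀ t ∈ Icc c d, f s t = g s t - h s t := by
    intro s hs t ht
    simp only [hgdef, hhdef, hcl1id s hs, hcl2id t ht]
    ring
  -- the constant
  set C : ℝ := (p + 1) ^ (1 - α) * (q + 1) ^ (1 - β) / (Real.Gamma α * Real.Gamma β)
    with hCdef
  have hC0 : 0 < C := by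
    have h1 : (0:ℝ) < (p+1) ^ (1-α) := Real.rpow_pos_of_pos (by linarith) _
    have h2 : (0:ℝ) < (q+1) ^ (1-β) := Real.rpow_pos_of_pos (by linarith) _
    have h3 : 0 < Real.Gamma α := Real.Gamma_pos_of_pos hα
    have h4 : 0 < Real.Gamma β := Real.Gamma_pos_of_pos hβ
    simp only [hCdef]
    positivity
  set UB : ℝ := (b ^ (p+1) - a ^ (p+1)) ^ α / (p+1)
    * ((d ^ (q+1) - c ^ (q+1)) ^ β / (q+1) * B * (1/β)) * (1/α) with hUBdef
  have hB0 : 0 ≤ B := le_trans (hg0 0 0) (hgB 0 0)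
  have hUB0 : 0 ≤ UB := by
    have h1 : a ^ (p+1) ≤ b ^ (p+1) := Real.rpow_le_rpow ha.le hab.le (by linarith)
    have h2 : c ^ (q+1) ≤ d ^ (q+1) := Real.rpow_le_rpow hc.le hcd.le (by linarith)
    have h3 : (0:ℝ) ≤ (b ^ (p+1) - a ^ (p+1)) ^ α := Real.rpow_nonneg (by linarith) _
    have h4 : (0:ℝ) ≤ (d ^ (q+1) - c ^ (q+1)) ^ β := Real.rpow_nonneg (by linarith) _
    have hp1 : (0:ℝ) < p + 1 := by linarith
    have hq1 : (0:ℝ) < q + 1 := by linarith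
    simp only [hUBdef]
    positivity
  -- representation of mixedKI on the rectangle
  have hrep : ∀ x ∈ Icc a b, ∀ y ∈ Icc c d,
      mixedKI a c p q α β f x y
        = C * (MKIBV.Phi a c p q α β g x y - MKIBV.Phi a c p q α β h x y) := by
    intro x hx y hy
    rw [mixedKI, MKIBV.double_split f g h ha hp hα hc hq hβ hgm1 hgm2 hhm1 hhm2 hsplit
      hx.1 hx.2 hy.1 hy.2]
  refine ⟨2 * C * UB + 1, by positivity, ?_⟩
  intro m xs ys hx0 hxm hy0 hym hxmono hymono
  have hxmem : ∀ i, i ≤ m → xs i ∈ Icc a b := MKIBV.chain_mem hx0 hxm hxmono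
  have hymem : ∀ i, i ≤ m → ys i ∈ Icc c d := MKIBV.chain_mem hy0 hym hymono
  have hPhig := fun (i : ℕ) (hi : i ≤ m) =>
    MKIBV.Phi_nonneg g ha hp hα hc hq hβ hgm1 hgm2 hg0 (hxmem i hi).1 (hymem i hi).1
  -- termwise bound
  have hterm : ∀ i ∈ Finset.range m,
      |(fun x y => mixedKI a c p q α β f x y) (xs (i+1)) (ys (i+1))
        - (fun x y => mixedKI a c p q α β f x y) (xs i) (ys i)|
      ≤ (C * MKIBV.Phi a c p q α β g (xs (i+1)) (ys (i+1))
          - C * MKIBV.Phi a c p q α β g (xs i) (ys i))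
        + (C * MKIBV.Phi a c p q α β h (xs (i+1)) (ys (i+1))
          - C * MKIBV.Phi a c p q α β h (xs i) (ys i)) := by
    intro i hi
    rw [Finset.mem_range] at hi
    have hxi := hxmem i (by omega)
    have hxi1 := hxmem (i+1) (by omega)
    have hyi := hymem i (by omega)
    have hyi1 := hymem (i+1) (by omega)
    have hxstep := hxmono i hi
    have hystep := hymono i hi
    have hmonog : MKIBV.Phi a c p q α β g (xs i) (ys i)
        ≤ MKIBV.Phi a c p q α β g (xs (i+1)) (ys (i+1)) :=
      le_trans
        (MKIBV.Phi_mono_x g ha hp hα hc hq hβ hgm1 hgm2 hg0 hxi.1 hxstep hyi.1)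
        (MKIBV.Phi_mono_y g ha hp hα hc hq hβ hgm1 hgm2 hg0 hxi1.1 hyi.1 hystep)
    have hmonoh : MKIBV.Phi a c p q α β h (xs i) (ys i)
        ≤ MKIBV.Phi a c p q α β h (xs (i+1)) (ys (i+1)) :=
      le_trans
        (MKIBV.Phi_mono_x h ha hp hα hc hq hβ hhm1 hhm2 hh0 hxi.1 hxstep hyi.1)
        (MKIBV.Phi_mono_y h ha hp hα hc hq hβ hhm1 hhm2 hh0 hxi1.1 hyi.1 hystep)
    simp only [hrep (xs i) hxi (ys i) hyi, hrep (xs (i+1)) hxi1 (ys (i+1)) hyi1]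
    set G0 := MKIBV.Phi a c p q α β g (xs i) (ys i)
    set G1 := MKIBV.Phi a c p q α β g (xs (i+1)) (ys (i+1))
    set H0 := MKIBV.Phi a c p q α β h (xs i) (ys i)
    set H1 := MKIBV.Phi a c p q α β h (xs (i+1)) (ys (i+1))
    have e1 : C * (G1 - H1) - C * (G0 - H0) = (C*G1 - C*G0) - (C*H1 - C*H0) := by ring
    rw [e1]
    refine le_trans (abs_sub _ _) ?_
    rw [abs_of_nonneg (by nlinarith : (0:ℝ) ≤ C*G1 - C*G0),
      abs_of_nonneg (by nlinarith : (0:ℝ) ≤ C*H1 - C*H0)]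
  refine le_trans (Finset.sum_le_sum hterm) ?_
  rw [Finset.sum_add_distrib,
    Finset.sum_range_sub (fun i => C * MKIBV.Phi a c p q α β g (xs i) (ys i)),
    Finset.sum_range_sub (fun i => C * MKIBV.Phi a c p q α β h (xs i) (ys i)),
    hx0, hxm, hy0, hym]
  have hgbd : MKIBV.Phi a c p q α β g b d ≤ UB :=
    MKIBV.Phi_le g ha hp hα hc hq hβ hgm1 hgm2 hg0 hgB hab.le (le_refl b) hcd.le (le_refl d)
  have hhbd : MKIBV.Phi a c p q α β h b d ≤ UB :=
    MKIBV.Phi_le h ha hp hα hc hq hβ hhm1 hhm2 hh0 hhB hab.le (le_refl b) hcd.le (le_refl d)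
  have hgac : 0 ≤ MKIBV.Phi a c p q α β g a c :=
    MKIBV.Phi_nonneg g ha hp hα hc hq hβ hgm1 hgm2 hg0 (le_refl a) (le_refl c)
  have hhac : 0 ≤ MKIBV.Phi a c p q α β h a c :=
    MKIBV.Phi_nonneg h ha hp hα hc hq hβ hhm1 hhm2 hh0 (le_refl a) (le_refl c)
  nlinarith [mul_le_mul_of_nonneg_left hgbd hC0.le, mul_le_mul_of_nonneg_left hhbd hC0.le,
    mul_nonneg hC0.le hgac, mul_nonneg hC0.le hhac]
end

section
/- If f : [a,b] × [c,d] → ℝ is continuous and of bounded variation in the sense of Arzelà, then the box dimension of its graph G(f) exists and dim_B(G(f)) = dim_H(G(f)) = 2, where dim_H denotes Hausdorff dimension. -/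
open MeasureTheory Set Filter
open scoped Classical

/-- Clamp a real number into `[a, b]`. -/
noncomputable def clampI (a b t : ℝ) : ℝ := max a (min t b)

lemma clampI_mem {a b : ℝ} (hab : a ≤ b) (t : ℝ) : clampI a b t ∈ Icc a b :=
  ⟨le_max_left _ _, max_le hab (min_le_right _ _)⟩

lemma clampI_mono {a b : ℝ} {s t : ℝ} (h : s ≤ t) : clampI a b s ≤ clampI a b t :=
  max_le_max le_rfl (min_le_min h le_rfl)

lemma clampI_le {a b s x : ℝ} (hax : a ≤ x) (hsx : s ≤ x) : clampI a b s ≤ x :=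
  max_le hax ((min_le_left _ _).trans hsx)

lemma le_clampI {a b s x : ℝ} (hxb : x ≤ b) (hxs : x ≤ s) : x ≤ clampI a b s :=
  le_trans (le_min hxs hxb) (le_max_right _ _)

/-- The part of the plane mesh cell `(i,j)` inside the rectangle. -/
def cellD (a b c d δ : ℝ) (i j : ℤ) : Set (ℝ × ℝ) :=
  (Icc ((i : ℝ) * δ) (((i : ℝ) + 1) * δ) ∩ Icc a b) ×ˢ
    (Icc ((j : ℝ) * δ) (((j : ℝ) + 1) * δ) ∩ Icc c d)

/-- Bottom-left reference point of cell `(i,j)`, clamped into the rectangle. -/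
noncomputable def loPt (a b c d δ : ℝ) (i j : ℤ) : ℝ × ℝ :=
  (clampI a b ((i : ℝ) * δ), clampI c d ((j : ℝ) * δ))

/-- Top-right reference point of cell `(i,j)`, clamped into the rectangle. -/
noncomputable def hiPt (a b c d δ : ℝ) (i j : ℤ) : ℝ × ℝ :=
  (clampI a b (((i : ℝ) + 1) * δ), clampI c d (((j : ℝ) + 1) * δ))

lemma hiPt_le_loPt_succ {a b c d δ : ℝ} (i j : ℤ) :
    hiPt a b c d δ i j ≤ loPt a b c d δ (i + 1) (j + 1) := by
  constructor <;> · dsimp [hiPt, loPt]; push_cast; exact le_rfl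

/-- Choice of a max point and a min point for `f` over a cell (degenerate when the cell
is empty). -/
lemma cell_points {a b c d δ : ℝ} (hab : a ≤ b) (hcd : c ≤ d) (hδ : 0 ≤ δ) {f : ℝ → ℝ → ℝ}
    (hf : ContinuousOn (fun pt : ℝ × ℝ => f pt.1 pt.2) (Icc a b ×ˢ Icc c d)) (i j : ℤ) :
    ∃ p q : ℝ × ℝ, p ∈ Icc a b ×ˢ Icc c d ∧ q ∈ Icc a b ×ˢ Icc c d ∧
      loPt a b c d δ i j ≤ p ∧ p ≤ hiPt a b c d δ i j ∧
      loPt a b c d δ i j ≤ q ∧ q ≤ hiPt a b c d δ i j ∧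
      f q.1 q.2 ≤ f p.1 p.2 ∧
      ∀ z ∈ cellD a b c d δ i j, f z.1 z.2 ≤ f p.1 p.2 ∧ f q.1 q.2 ≤ f z.1 z.2 := by
  by_cases hne : (cellD a b c d δ i j).Nonempty
  · have hsub : cellD a b c d δ i j ⊆ Icc a b ×ˢ Icc c d :=
      prod_mono inter_subset_right inter_subset_right
    have hcomp : IsCompact (cellD a b c d δ i j) :=
      (isCompact_Icc.inter_right isClosed_Icc).prod (isCompact_Icc.inter_right isClosed_Icc)
    obtain ⟨p, hpD, hpmax⟩ := hcomp.exists_isMaxOn hne (hf.mono hsub)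
    obtain ⟨q, hqD, hqmin⟩ := hcomp.exists_isMinOn hne (hf.mono hsub)
    have key : ∀ z ∈ cellD a b c d δ i j,
        loPt a b c d δ i j ≤ z ∧ z ≤ hiPt a b c d δ i j := by
      intro z hz
      obtain ⟨⟨hz1, hz1'⟩, hz2, hz2'⟩ := hz
      exact ⟨⟨clampI_le hz1'.1 hz1.1, clampI_le hz2'.1 hz2.1⟩,
        ⟨le_clampI hz1'.2 hz1.2, le_clampI hz2'.2 hz2.2⟩⟩
    exact ⟨p, q, hsub hpD, hsub hqD, (key p hpD).1, (key p hpD).2,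
      (key q hqD).1, (key q hqD).2, hqmin hpD,
      fun z hz => ⟨hpmax hz, hqmin hz⟩⟩
  · refine ⟨loPt a b c d δ i j, loPt a b c d δ i j,
      ⟨clampI_mem hab _, clampI_mem hcd _⟩, ⟨clampI_mem hab _, clampI_mem hcd _⟩,
      le_rfl, ?_, le_rfl, ?_, le_rfl, fun z hz => absurd ⟨z, hz⟩ hne⟩ <;>
    · constructor <;> · dsimp [loPt, hiPt]; exact clampI_mono (by nlinarith [hδ])

/-- Arzelà BV controls sums of |f| increments along any monotone chain of points of the
rectangle. -/
lemma chain_sum {a b c d : ℝ} {f : ℝ → ℝ → ℝ} {M : ℝ}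
    (hM : ∀ (m : ℕ) (x y : ℕ → ℝ),
      x 0 = a → x m = b → y 0 = c → y m = d →
      (∀ i < m, x i ≤ x (i + 1)) → (∀ i < m, y i ≤ y (i + 1)) →
      ∑ i ∈ Finset.range m, |f (x (i + 1)) (y (i + 1)) - f (x i) (y i)| ≤ M)
    (K : ℕ) (P : ℕ → ℝ × ℝ)
    (hmem : ∀ i ≤ K, P i ∈ Icc a b ×ˢ Icc c d)
    (hmono : ∀ i < K, P i ≤ P (i + 1)) :
    ∑ i ∈ Finset.range K, |f (P (i + 1)).1 (P (i + 1)).2 - f (P i).1 (P i).2| ≤ M := by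
  set x : ℕ → ℝ := fun n => if n = 0 then a else if n ≤ K + 1 then (P (n - 1)).1 else b with hx
  set y : ℕ → ℝ := fun n => if n = 0 then c else if n ≤ K + 1 then (P (n - 1)).2 else d with hy
  have h0 : (0 : ℝ) ≤ 1 := zero_le_one
  have hxm : ∀ i < K + 2, x i ≤ x (i + 1) := by
    intro i hi
    rcases Nat.eq_zero_or_pos i with rfl | hpos
    · simp only [hx, if_pos rfl, if_neg (Nat.succ_ne_zero 0), if_pos (by omega : 1 ≤ K + 1)]
      exact (hmem 0 (Nat.zero_le _)).1.1
    · have hi1 : i ≠ 0 := Nat.pos_iff_ne_zero.mp hpos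
      by_cases h2 : i + 1 ≤ K + 1
      · simp only [hx, if_neg hi1, if_neg (Nat.succ_ne_zero i), if_pos h2,
          if_pos (Nat.le_of_succ_le h2)]
        have : i - 1 < K := by omega
        have := (hmono (i - 1) this).1
        simpa [Nat.sub_add_cancel hpos] using this
      · have hiK : i = K + 1 := by omega
        subst hiK
        simp only [hx, if_neg hi1, if_neg (Nat.succ_ne_zero _), if_pos le_rfl,
          if_neg (by omega : ¬ K + 1 + 1 ≤ K + 1)]
        exact (hmem (K + 1 - 1) (by omega)).1.2
  have hym : ∀ i < K + 2, y i ≤ y (i + 1) := by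
    intro i hi
    rcases Nat.eq_zero_or_pos i with rfl | hpos
    · simp only [hy, if_pos rfl, if_neg (Nat.succ_ne_zero 0), if_pos (by omega : 1 ≤ K + 1)]
      exact (hmem 0 (Nat.zero_le _)).2.1
    · have hi1 : i ≠ 0 := Nat.pos_iff_ne_zero.mp hpos
      by_cases h2 : i + 1 ≤ K + 1
      · simp only [hy, if_neg hi1, if_neg (Nat.succ_ne_zero i), if_pos h2,
          if_pos (Nat.le_of_succ_le h2)]
        have : i - 1 < K := by omega
        have := (hmono (i - 1) this).2
        simpa [Nat.sub_add_cancel hpos] using this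
      · have hiK : i = K + 1 := by omega
        subst hiK
        simp only [hy, if_neg hi1, if_neg (Nat.succ_ne_zero _), if_pos le_rfl,
          if_neg (by omega : ¬ K + 1 + 1 ≤ K + 1)]
        exact (hmem (K + 1 - 1) (by omega)).2.2
  have hbig := hM (K + 2) x y (by simp [hx]) (by simp [hx])
      (by simp [hy]) (by simp [hy]) hxm hym
  set g : ℕ → ℝ := fun i => |f (x (i + 1)) (y (i + 1)) - f (x i) (y i)| with hg
  have hsub : ∑ i ∈ Finset.range K, g (i + 1) ≤ ∑ i ∈ Finset.range (K + 2), g i := by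
    have e : ∑ i ∈ Finset.Ico 1 (K + 1), g i = ∑ i ∈ Finset.range K, g (i + 1) := by
      rw [Finset.sum_Ico_eq_sum_range]
      simp [add_comm]
    rw [← e]
    refine Finset.sum_le_sum_of_subset_of_nonneg ?_ (fun _ _ _ => abs_nonneg _)
    intro t ht
    simp only [Finset.mem_Ico, Finset.mem_range] at ht ⊢
    omega
  refine le_trans (le_of_eq ?_) (hsub.trans hbig)
  refine Finset.sum_congr rfl fun i hi => ?_
  simp only [Finset.mem_range] at hi
  have e1 : x (i + 1 + 1) = (P (i + 1)).1 := by
    simp only [hx, if_neg (Nat.succ_ne_zero _), if_pos (by omega : i + 1 + 1 ≤ K + 1),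
      Nat.add_sub_cancel]
  have e2 : x (i + 1) = (P i).1 := by
    simp only [hx, if_neg (Nat.succ_ne_zero _), if_pos (by omega : i + 1 ≤ K + 1),
      Nat.add_sub_cancel]
  have e3 : y (i + 1 + 1) = (P (i + 1)).2 := by
    simp only [hy, if_neg (Nat.succ_ne_zero _), if_pos (by omega : i + 1 + 1 ≤ K + 1),
      Nat.add_sub_cancel]
  have e4 : y (i + 1) = (P i).2 := by
    simp only [hy, if_neg (Nat.succ_ne_zero _), if_pos (by omega : i + 1 ≤ K + 1),
      Nat.add_sub_cancel]
  rw [hg]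
  simp only [e1, e2, e3, e4]

/-- Sums of oscillation-type increments along a monotone chain of cells are bounded. -/
lemma osc_chain {a b c d : ℝ} {f : ℝ → ℝ → ℝ} {M : ℝ}
    (hM : ∀ (m : ℕ) (x y : ℕ → ℝ),
      x 0 = a → x m = b → y 0 = c → y m = d →
      (∀ i < m, x i ≤ x (i + 1)) → (∀ i < m, y i ≤ y (i + 1)) →
      ∑ i ∈ Finset.range m, |f (x (i + 1)) (y (i + 1)) - f (x i) (y i)| ≤ M)
    (hM0 : 0 ≤ M)
    (K : ℕ) (lo hi u : ℕ → ℝ × ℝ)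
    (hlomem : ∀ t < K, lo t ∈ Icc a b ×ˢ Icc c d)
    (himem : ∀ t < K, hi t ∈ Icc a b ×ˢ Icc c d)
    (humem : ∀ t < K, u t ∈ Icc a b ×ˢ Icc c d)
    (h1 : ∀ t < K, lo t ≤ u t) (h2 : ∀ t < K, u t ≤ hi t)
    (h3 : ∀ t, t + 1 < K → hi t ≤ lo (t + 1)) :
    ∑ t ∈ Finset.range K, |f (u t).1 (u t).2 - f (lo t).1 (lo t).2| ≤ M := by
  rcases Nat.eq_zero_or_pos K with rfl | hK
  · simpa using hM0
  set P : ℕ → ℝ × ℝ := fun n =>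
    if n % 3 = 0 then lo (n / 3) else if n % 3 = 1 then u (n / 3) else hi (n / 3) with hP
  have P0 : ∀ n, n % 3 = 0 → P n = lo (n / 3) := fun n h => by simp [hP, h]
  have P1 : ∀ n, n % 3 = 1 → P n = u (n / 3) := fun n h => by simp [hP, h]
  have P2 : ∀ n, n % 3 = 2 → P n = hi (n / 3) := fun n h => by simp [hP, h]
  have hmem : ∀ i ≤ 3 * K - 1, P i ∈ Icc a b ×ˢ Icc c d := by
    intro i hi3
    have hlt : i / 3 < K := by omega
    have hc : i % 3 = 0 ∨ i % 3 = 1 ∨ i % 3 = 2 := by omega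
    rcases hc with h | h | h
    · rw [P0 i h]; exact hlomem _ hlt
    · rw [P1 i h]; exact humem _ hlt
    · rw [P2 i h]; exact himem _ hlt
  have hmono : ∀ i < 3 * K - 1, P i ≤ P (i + 1) := by
    intro i hi3
    have hc : i % 3 = 0 ∨ i % 3 = 1 ∨ i % 3 = 2 := by omega
    rcases hc with h | h | h
    · have h1' : (i + 1) % 3 = 1 := by omega
      have h2' : (i + 1) / 3 = i / 3 := by omega
      rw [P0 i h, P1 _ h1', h2']
      exact h1 _ (by omega)
    · have h1' : (i + 1) % 3 = 2 := by omega
      have h2' : (i + 1) / 3 = i / 3 := by omega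
      rw [P1 i h, P2 _ h1', h2']
      exact h2 _ (by omega)
    · have h1' : (i + 1) % 3 = 0 := by omega
      have h2' : (i + 1) / 3 = i / 3 + 1 := by omega
      rw [P2 i h, P0 _ h1', h2']
      exact h3 _ (by omega)
  have hbig := chain_sum hM (3 * K - 1) P hmem hmono
  set T : ℕ → ℝ := fun i => |f (P (i + 1)).1 (P (i + 1)).2 - f (P i).1 (P i).2| with hT
  have hsub : ∑ t ∈ Finset.range K, T (3 * t) ≤ ∑ i ∈ Finset.range (3 * K - 1), T i := by
    rw [← Finset.sum_image (g := fun t => 3 * t) (f := T)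
      (by intro u _ v _ h; simp only [] at h; omega)]
    refine Finset.sum_le_sum_of_subset_of_nonneg ?_ (fun _ _ _ => abs_nonneg _)
    intro t ht
    simp only [Finset.mem_image, Finset.mem_range] at ht ⊢
    obtain ⟨v, hv, rfl⟩ := ht
    show 3 * v < 3 * K - 1
    omega
  refine le_trans (le_of_eq ?_) (hsub.trans hbig)
  refine Finset.sum_congr rfl fun t ht => ?_
  simp only [Finset.mem_range] at ht
  have e1 : P (3 * t) = lo t := by
    rw [P0 _ (by omega), (by omega : (3 * t) / 3 = t)]
  have e2 : P (3 * t + 1) = u t := by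
    rw [P1 _ (by omega), (by omega : (3 * t + 1) / 3 = t)]
  rw [hT]
  simp only [e1, e2]

/-- Sum of oscillations over a grid box of cells is controlled by `2M` times the
number of diagonals. -/
lemma box_osc_sum {a b c d : ℝ} {f : ℝ → ℝ → ℝ} {M : ℝ}
    (hM : ∀ (m : ℕ) (x y : ℕ → ℝ),
      x 0 = a → x m = b → y 0 = c → y m = d →
      (∀ i < m, x i ≤ x (i + 1)) → (∀ i < m, y i ≤ y (i + 1)) →
      ∑ i ∈ Finset.range m, |f (x (i + 1)) (y (i + 1)) - f (x i) (y i)| ≤ M)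
    (hM0 : 0 ≤ M) {δ : ℝ}
    (P Q : ℤ → ℤ → ℝ × ℝ)
    (hPmem : ∀ i j, P i j ∈ Icc a b ×ˢ Icc c d)
    (hQmem : ∀ i j, Q i j ∈ Icc a b ×ˢ Icc c d)
    (hPlo : ∀ i j, loPt a b c d δ i j ≤ P i j) (hPhi : ∀ i j, P i j ≤ hiPt a b c d δ i j)
    (hQlo : ∀ i j, loPt a b c d δ i j ≤ Q i j) (hQhi : ∀ i j, Q i j ≤ hiPt a b c d δ i j)
    (hPQ : ∀ i j, f (Q i j).1 (Q i j).2 ≤ f (P i j).1 (P i j).2)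
    (iLo iHi jLo jHi : ℤ) :
    ∑ x ∈ Finset.Icc iLo iHi ×ˢ Finset.Icc jLo jHi,
        (f (P x.1 x.2).1 (P x.1 x.2).2 - f (Q x.1 x.2).1 (Q x.1 x.2).2)
      ≤ (((iHi - iLo) + (jHi - jLo) + 1).toNat : ℝ) * (2 * M) := by
  classical
  set osc : ℤ × ℤ → ℝ :=
    fun x => f (P x.1 x.2).1 (P x.1 x.2).2 - f (Q x.1 x.2).1 (Q x.1 x.2).2 with hosc
  have hosc0 : ∀ x : ℤ × ℤ, 0 ≤ osc x := fun x => sub_nonneg.mpr (hPQ x.1 x.2)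
  set Box : Finset (ℤ × ℤ) := Finset.Icc iLo iHi ×ˢ Finset.Icc jLo jHi with hBox
  set R : Finset ℤ := Finset.Icc (iLo - jHi) (iHi - jLo) with hR
  have hmaps : ∀ x ∈ Box, x.1 - x.2 ∈ R := by
    intro x hx
    simp only [hBox, Finset.mem_product, Finset.mem_Icc] at hx
    simp only [hR, Finset.mem_Icc]
    omega
  have fiber_le : ∀ r ∈ R, ∑ x ∈ Box.filter (fun x => x.1 - x.2 = r), osc x ≤ 2 * M := by
    intro r _
    set K := (iHi + 1 - iLo).toNat with hK
    set g : ℕ → ℤ × ℤ := fun t => (iLo + t, iLo + t - r) with hg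
    have hginj : ∀ u ∈ Finset.range K, ∀ v ∈ Finset.range K, g u = g v → u = v := by
      intro u _ v _ h
      have := congrArg Prod.fst h
      simp only [hg] at this
      omega
    have himg : Box.filter (fun x => x.1 - x.2 = r) ⊆ (Finset.range K).image g := by
      intro x hx
      simp only [Finset.mem_filter, hBox, Finset.mem_product, Finset.mem_Icc] at hx
      obtain ⟨⟨⟨h1, h2⟩, h3, h4⟩, h5⟩ := hx
      refine Finset.mem_image.mpr ⟨(x.1 - iLo).toNat, Finset.mem_range.mpr (by omega), ?_⟩
      have e1 : iLo + ((x.1 - iLo).toNat : ℤ) = x.1 := by omega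
      have e2 : iLo + ((x.1 - iLo).toNat : ℤ) - r = x.2 := by omega
      simp only [hg]
      exact Prod.ext e1 e2
    have step1 : ∑ x ∈ Box.filter (fun x => x.1 - x.2 = r), osc x
        ≤ ∑ t ∈ Finset.range K, osc (g t) := by
      rw [← Finset.sum_image hginj]
      exact Finset.sum_le_sum_of_subset_of_nonneg himg fun x _ _ => hosc0 x
    refine step1.trans ?_
    set lo : ℕ → ℝ × ℝ := fun t => loPt a b c d δ (g t).1 (g t).2 with hlo
    set hi : ℕ → ℝ × ℝ := fun t => hiPt a b c d δ (g t).1 (g t).2 with hhi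
    have hrect : a ≤ b ∧ c ≤ d := by
      have := (hPmem 0 0).1
      have := (hPmem 0 0).2
      exact ⟨((hPmem 0 0).1).1.trans ((hPmem 0 0).1).2, ((hPmem 0 0).2).1.trans ((hPmem 0 0).2).2⟩
    have hlomem : ∀ t, lo t ∈ Icc a b ×ˢ Icc c d :=
      fun t => ⟨clampI_mem hrect.1 _, clampI_mem hrect.2 _⟩
    have hhimem : ∀ t, hi t ∈ Icc a b ×ˢ Icc c d :=
      fun t => ⟨clampI_mem hrect.1 _, clampI_mem hrect.2 _⟩
    have hsucc : ∀ t : ℕ, hi t ≤ lo (t + 1) := by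
      intro t
      have e : g (t + 1) = ((g t).1 + 1, (g t).2 + 1) := by
        simp only [hg]
        refine Prod.ext ?_ ?_ <;> · push_cast; ring
      show hiPt a b c d δ (g t).1 (g t).2 ≤ loPt a b c d δ (g (t + 1)).1 (g (t + 1)).2
      rw [e]
      exact hiPt_le_loPt_succ _ _
    have hs1 : ∑ t ∈ Finset.range K,
        |f (P (g t).1 (g t).2).1 (P (g t).1 (g t).2).2 - f (lo t).1 (lo t).2| ≤ M :=
      osc_chain hM hM0 K lo hi (fun t => P (g t).1 (g t).2)
        (fun t _ => hlomem t) (fun t _ => hhimem t) (fun t _ => hPmem _ _)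
        (fun t _ => hPlo _ _) (fun t _ => hPhi _ _) (fun t _ => hsucc t)
    have hs2 : ∑ t ∈ Finset.range K,
        |f (Q (g t).1 (g t).2).1 (Q (g t).1 (g t).2).2 - f (lo t).1 (lo t).2| ≤ M :=
      osc_chain hM hM0 K lo hi (fun t => Q (g t).1 (g t).2)
        (fun t _ => hlomem t) (fun t _ => hhimem t) (fun t _ => hQmem _ _)
        (fun t _ => hQlo _ _) (fun t _ => hQhi _ _) (fun t _ => hsucc t)
    have hpt : ∀ t ∈ Finset.range K, osc (g t)
        ≤ |f (P (g t).1 (g t).2).1 (P (g t).1 (g t).2).2 - f (lo t).1 (lo t).2|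
          + |f (Q (g t).1 (g t).2).1 (Q (g t).1 (g t).2).2 - f (lo t).1 (lo t).2| := by
      intro t _
      rw [hosc]
      set A := f (P (g t).1 (g t).2).1 (P (g t).1 (g t).2).2
      set B := f (Q (g t).1 (g t).2).1 (Q (g t).1 (g t).2).2
      set C := f (lo t).1 (lo t).2
      calc A - B = (A - C) - (B - C) := by ring
        _ ≤ |A - C| + |B - C| := by
            have := abs_sub (A - C) (B - C)
            calc (A - C) - (B - C) ≤ |(A - C) - (B - C)| := le_abs_self _
              _ ≤ |A - C| + |B - C| := abs_sub _ _
    calc ∑ t ∈ Finset.range K, osc (g t)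
        ≤ ∑ t ∈ Finset.range K,
          (|f (P (g t).1 (g t).2).1 (P (g t).1 (g t).2).2 - f (lo t).1 (lo t).2|
            + |f (Q (g t).1 (g t).2).1 (Q (g t).1 (g t).2).2 - f (lo t).1 (lo t).2|) :=
          Finset.sum_le_sum hpt
      _ = _ + _ := Finset.sum_add_distrib
      _ ≤ M + M := add_le_add hs1 hs2
      _ = 2 * M := by ring
  have := Finset.sum_fiberwise_of_maps_to hmaps osc
  rw [← this]
  have hcard : R.card = ((iHi - iLo) + (jHi - jLo) + 1).toNat := by
    rw [hR, Int.card_Icc]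
    congr 1
    omega
  calc ∑ r ∈ R, ∑ x ∈ Box.filter (fun x => x.1 - x.2 = r), osc x
      ≤ ∑ _r ∈ R, 2 * M := Finset.sum_le_sum fiber_le
    _ = R.card * (2 * M) := by rw [Finset.sum_const, nsmul_eq_mul]
    _ = _ := by rw [hcard]

lemma toNat_cast_le {z : ℤ} {w : ℝ} (hw : 0 ≤ w) (h : (z : ℝ) ≤ w) : ((z.toNat : ℝ)) ≤ w := by
  rcases le_or_gt z 0 with h0 | h0
  · simp [Int.toNat_of_nonpos h0, hw]
  · rw [show ((z.toNat : ℝ)) = ((z.toNat : ℤ) : ℝ) from by push_cast; ring,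
      Int.toNat_of_nonneg h0.le]
    exact h

lemma le_toNat_cast {z : ℤ} {w : ℝ} (h : w ≤ (z : ℝ)) : w ≤ ((z.toNat : ℝ)) := by
  refine h.trans ?_
  rw [show ((z.toNat : ℝ)) = ((z.toNat : ℤ) : ℝ) from by push_cast; ring]
  exact_mod_cast Int.self_le_toNat z

/-- Main upper bound on the number of mesh cubes meeting the graph. -/
lemma count_upper {a b c d : ℝ} (hab : a < b) (hcd : c < d) {f : ℝ → ℝ → ℝ} {M : ℝ}
    (hM : ∀ (m : ℕ) (x y : ℕ → ℝ),
      x 0 = a → x m = b → y 0 = c → y m = d →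
      (∀ i < m, x i ≤ x (i + 1)) → (∀ i < m, y i ≤ y (i + 1)) →
      ∑ i ∈ Finset.range m, |f (x (i + 1)) (y (i + 1)) - f (x i) (y i)| ≤ M)
    (hM0 : 0 < M)
    (hf : ContinuousOn (fun pt : ℝ × ℝ => f pt.1 pt.2) (Icc a b ×ˢ Icc c d))
    {δ : ℝ} (hδ : 0 < δ) (hδ1 : δ ≤ 1) :
    {p : ℤ × ℤ × ℤ | (meshCube δ p.1 p.2.1 p.2.2 ∩ graphRect a b c d f).Nonempty}.Finite ∧
    (meshCount δ (graphRect a b c d f) : ℝ) ≤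
      (2 * M * ((b - a) + (d - c) + 5) + 2 * ((b - a) + 3) * ((d - c) + 3)) / δ ^ 2 := by
  classical
  choose P Q hPmem hQmem hPlo hPhi hQlo hQhi hPQ hExt using
    fun i j => cell_points (δ := δ) hab.le hcd.le hδ.le hf i j
  set T : Set (ℤ × ℤ × ℤ) :=
    {p : ℤ × ℤ × ℤ | (meshCube δ p.1 p.2.1 p.2.2 ∩ graphRect a b c d f).Nonempty} with hT
  set iLo : ℤ := ⌊a / δ⌋ - 1 with hiLo
  set iHi : ℤ := ⌊b / δ⌋ with hiHi
  set jLo : ℤ := ⌊c / δ⌋ - 1 with hjLo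
  set jHi : ℤ := ⌊d / δ⌋ with hjHi
  set Box : Finset (ℤ × ℤ) := Finset.Icc iLo iHi ×ˢ Finset.Icc jLo jHi with hBox
  set kI : ℤ × ℤ → Finset ℤ := fun ij =>
    Finset.Icc (⌈f (Q ij.1 ij.2).1 (Q ij.1 ij.2).2 / δ⌉ - 1)
      ⌊f (P ij.1 ij.2).1 (P ij.1 ij.2).2 / δ⌋ with hkI
  set U : Finset (ℤ × ℤ × ℤ) :=
    Box.biUnion (fun ij => {ij.1} ×ˢ ({ij.2} ×ˢ kI ij)) with hU
  have hTU : T ⊆ ↑U := by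
    rintro ⟨i, j, k⟩ ⟨w, hwc, hwG⟩
    obtain ⟨hwx, hwy, hwz⟩ := hwc
    obtain ⟨hgx, hgy, hgz⟩ := hwG
    set x := w.1; set y := w.2.1; set z := w.2.2
    have hzcell : (x, y) ∈ cellD a b c d δ i j := ⟨⟨hwx, hgx⟩, hwy, hgy⟩
    have hfb := hExt i j (x, y) hzcell
    have hkub : k ≤ ⌊f (P i j).1 (P i j).2 / δ⌋ := by
      refine Int.le_floor.mpr ?_
      rw [le_div_iff₀ hδ]
      calc (k : ℝ) * δ ≤ z := hwz.1
        _ = f x y := hgz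
        _ ≤ f (P i j).1 (P i j).2 := hfb.1
    have hklb : ⌈f (Q i j).1 (Q i j).2 / δ⌉ - 1 ≤ k := by
      have h1 : f (Q i j).1 (Q i j).2 / δ ≤ ((k + 1 : ℤ) : ℝ) := by
        rw [div_le_iff₀ hδ]
        push_cast
        calc f (Q i j).1 (Q i j).2 ≤ f x y := hfb.2
          _ = z := hgz.symm
          _ ≤ ((k : ℝ) + 1) * δ := hwz.2
      have := Int.ceil_le.mpr h1
      omega
    have hiub : i ≤ iHi := by
      refine Int.le_floor.mpr ?_
      rw [le_div_iff₀ hδ]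
      exact hwx.1.trans hgx.2
    have hilb : iLo ≤ i := by
      have h1 : a / δ ≤ ((i + 1 : ℤ) : ℝ) := by
        rw [div_le_iff₀ hδ]
        push_cast
        exact hgx.1.trans hwx.2
      have := Int.floor_le_floor h1
      rw [Int.floor_intCast] at this
      omega
    have hjub : j ≤ jHi := by
      refine Int.le_floor.mpr ?_
      rw [le_div_iff₀ hδ]
      exact hwy.1.trans hgy.2
    have hjlb : jLo ≤ j := by
      have h1 : c / δ ≤ ((j + 1 : ℤ) : ℝ) := by
        rw [div_le_iff₀ hδ]
        push_cast
        exact hgy.1.trans hwy.2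
      have := Int.floor_le_floor h1
      rw [Int.floor_intCast] at this
      omega
    refine Finset.mem_coe.mpr (Finset.mem_biUnion.mpr ⟨(i, j), ?_, ?_⟩)
    · simp only [hBox, Finset.mem_product, Finset.mem_Icc]
      exact ⟨⟨hilb, hiub⟩, hjlb, hjub⟩
    · simp only [Finset.mem_product, Finset.mem_singleton, hkI, Finset.mem_Icc]
      exact ⟨trivial, trivial, hklb, hkub⟩
  have hTfin : T.Finite := U.finite_toSet.subset hTU
  refine ⟨hTfin, ?_⟩
  have hcount : meshCount δ (graphRect a b c d f) ≤ U.card := by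
    have h1 : Nat.card T = T.ncard := Nat.card_coe_set_eq T
    have h2 : T.ncard ≤ (↑U : Set (ℤ × ℤ × ℤ)).ncard :=
      Set.ncard_le_ncard hTU U.finite_toSet
    have h3 : (↑U : Set (ℤ × ℤ × ℤ)).ncard = U.card := Set.ncard_coe_finset U
    calc meshCount δ (graphRect a b c d f) = Nat.card T := rfl
      _ = T.ncard := h1
      _ ≤ _ := h2
      _ = U.card := h3
  have hUcard : (U.card : ℝ) ≤ ∑ ij ∈ Box, ((kI ij).card : ℝ) := by
    have h1 : U.card ≤ ∑ ij ∈ Box, ({ij.1} ×ˢ ({ij.2} ×ˢ kI ij)).card :=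
      Finset.card_biUnion_le
    have h2 : ∀ ij : ℤ × ℤ, ({ij.1} ×ˢ ({ij.2} ×ˢ kI ij)).card = (kI ij).card := by
      intro ij
      simp [Finset.card_product]
    calc (U.card : ℝ) ≤ ((∑ ij ∈ Box, ({ij.1} ×ˢ ({ij.2} ×ˢ kI ij)).card : ℕ) : ℝ) := by
          exact_mod_cast h1
      _ = ∑ ij ∈ Box, ((kI ij).card : ℝ) := by
          push_cast
          exact Finset.sum_congr rfl fun ij _ => by rw [h2 ij]
  set osc : ℤ × ℤ → ℝ :=
    fun ij => f (P ij.1 ij.2).1 (P ij.1 ij.2).2 - f (Q ij.1 ij.2).1 (Q ij.1 ij.2).2 with hosc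
  have hkcard : ∀ ij ∈ Box, ((kI ij).card : ℝ) ≤ osc ij / δ + 2 := by
    intro ij _
    have hoscnn : 0 ≤ osc ij := sub_nonneg.mpr (hPQ ij.1 ij.2)
    have hrhs : 0 ≤ osc ij / δ + 2 := by positivity
    rw [hkI]
    rw [Int.card_Icc]
    refine toNat_cast_le hrhs ?_
    push_cast
    have h1 : (⌊f (P ij.1 ij.2).1 (P ij.1 ij.2).2 / δ⌋ : ℝ) ≤
        f (P ij.1 ij.2).1 (P ij.1 ij.2).2 / δ := Int.floor_le _
    have h2 : f (Q ij.1 ij.2).1 (Q ij.1 ij.2).2 / δ ≤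
        (⌈f (Q ij.1 ij.2).1 (Q ij.1 ij.2).2 / δ⌉ : ℝ) := Int.le_ceil _
    rw [hosc, sub_div]
    linarith
  have hsum1 : ∑ ij ∈ Box, (osc ij / δ + 2) =
      (∑ ij ∈ Box, osc ij) / δ + 2 * Box.card := by
    rw [Finset.sum_add_distrib, ← Finset.sum_div, Finset.sum_const, nsmul_eq_mul]
    ring
  have hoscsum : ∑ ij ∈ Box, osc ij ≤
      (((iHi - iLo) + (jHi - jLo) + 1).toNat : ℝ) * (2 * M) := by
    rw [hBox, hosc]
    exact box_osc_sum hM hM0.le P Q hPmem hQmem hPlo hPhi hQlo hQhi hPQ iLo iHi jLo jHi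
  have hnr : ((((iHi - iLo) + (jHi - jLo) + 1).toNat : ℝ)) ≤ ((b - a) + (d - c) + 5) / δ := by
    have hb : (iHi : ℝ) ≤ b / δ := Int.floor_le _
    have ha : a / δ - 1 ≤ (⌊a / δ⌋ : ℝ) := by
      have := Int.sub_one_lt_floor (a / δ)
      linarith
    have hd : (jHi : ℝ) ≤ d / δ := Int.floor_le _
    have hc : c / δ - 1 ≤ (⌊c / δ⌋ : ℝ) := by
      have := Int.sub_one_lt_floor (c / δ)
      linarith
    have h5 : (5 : ℝ) ≤ 5 / δ := by
      rw [le_div_iff₀ hδ]; linarith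
    refine toNat_cast_le (div_nonneg (by linarith) hδ.le) ?_
    rw [hiLo, hiHi, hjLo, hjHi]
    push_cast
    have e1 : ((b - a) + (d - c) + 5) / δ = b / δ - a / δ + (d / δ - c / δ) + 5 / δ := by
      field_simp
    rw [e1]
    linarith
  have hBoxcard : (Box.card : ℝ) ≤ (((b - a) + 3) / δ) * (((d - c) + 3) / δ) := by
    have hb : (iHi : ℝ) ≤ b / δ := Int.floor_le _
    have ha : a / δ - 1 ≤ (⌊a / δ⌋ : ℝ) := by
      have := Int.sub_one_lt_floor (a / δ)
      linarith
    have hd : (jHi : ℝ) ≤ d / δ := Int.floor_le _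
    have hc : c / δ - 1 ≤ (⌊c / δ⌋ : ℝ) := by
      have := Int.sub_one_lt_floor (c / δ)
      linarith
    have h3 : (3 : ℝ) ≤ 3 / δ := by
      rw [le_div_iff₀ hδ]; linarith
    have hIc : ((Finset.Icc iLo iHi).card : ℝ) ≤ ((b - a) + 3) / δ := by
      rw [Int.card_Icc]
      refine toNat_cast_le (div_nonneg (by linarith) hδ.le) ?_
      rw [hiLo, hiHi]
      push_cast
      have e1 : ((b - a) + 3) / δ = b / δ - a / δ + 3 / δ := by
        field_simp
      rw [e1]
      linarith
    have hJc : ((Finset.Icc jLo jHi).card : ℝ) ≤ ((d - c) + 3) / δ := by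
      rw [Int.card_Icc]
      refine toNat_cast_le (div_nonneg (by linarith) hδ.le) ?_
      rw [hjLo, hjHi]
      push_cast
      have e1 : ((d - c) + 3) / δ = d / δ - c / δ + 3 / δ := by
        field_simp
      rw [e1]
      linarith
    rw [hBox, Finset.card_product]
    push_cast
    have hI0 : (0 : ℝ) ≤ ((Finset.Icc iLo iHi).card : ℝ) := Nat.cast_nonneg _
    have hJ0 : (0 : ℝ) ≤ ((Finset.Icc jLo jHi).card : ℝ) := Nat.cast_nonneg _
    exact mul_le_mul hIc hJc hJ0 (div_nonneg (by linarith) hδ.le)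
  -- put everything together
  have main : (meshCount δ (graphRect a b c d f) : ℝ) ≤
      (((b - a) + (d - c) + 5) / δ) * (2 * M) / δ +
        2 * ((((b - a) + 3) / δ) * (((d - c) + 3) / δ)) := by
    have c1 : (meshCount δ (graphRect a b c d f) : ℝ) ≤ (U.card : ℝ) := by
      exact_mod_cast hcount
    have c2 : ∑ ij ∈ Box, ((kI ij).card : ℝ) ≤ ∑ ij ∈ Box, (osc ij / δ + 2) :=
      Finset.sum_le_sum hkcard
    have c3 : (∑ ij ∈ Box, osc ij) / δ ≤
        ((((iHi - iLo) + (jHi - jLo) + 1).toNat : ℝ) * (2 * M)) / δ := by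
      gcongr
    have c4 : (((iHi - iLo) + (jHi - jLo) + 1).toNat : ℝ) * (2 * M) / δ ≤
        (((b - a) + (d - c) + 5) / δ) * (2 * M) / δ := by
      gcongr
    have c5 : 2 * (Box.card : ℝ) ≤ 2 * ((((b - a) + 3) / δ) * (((d - c) + 3) / δ)) := by
      linarith
    calc (meshCount δ (graphRect a b c d f) : ℝ)
        ≤ (U.card : ℝ) := c1
      _ ≤ ∑ ij ∈ Box, ((kI ij).card : ℝ) := hUcard
      _ ≤ ∑ ij ∈ Box, (osc ij / δ + 2) := c2
      _ = (∑ ij ∈ Box, osc ij) / δ + 2 * Box.card := hsum1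
      _ ≤ (((b - a) + (d - c) + 5) / δ) * (2 * M) / δ +
            2 * ((((b - a) + 3) / δ) * (((d - c) + 3) / δ)) := by
          refine add_le_add (le_trans c3 c4) c5
  refine main.trans (le_of_eq ?_)
  field_simp

lemma count_lower {a b c d : ℝ} (hab : a < b) (hcd : c < d) (f : ℝ → ℝ → ℝ)
    {δ : ℝ} (hδ : 0 < δ) (h4a : 4 * δ ≤ b - a) (h4c : 4 * δ ≤ d - c)
    (hfin : {p : ℤ × ℤ × ℤ |
      (meshCube δ p.1 p.2.1 p.2.2 ∩ graphRect a b c d f).Nonempty}.Finite) :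
    ((b - a) / (2 * δ)) * ((d - c) / (2 * δ)) ≤
      (meshCount δ (graphRect a b c d f) : ℝ) := by
  classical
  set T : Set (ℤ × ℤ × ℤ) :=
    {p : ℤ × ℤ × ℤ | (meshCube δ p.1 p.2.1 p.2.2 ∩ graphRect a b c d f).Nonempty} with hT
  set A : Finset (ℤ × ℤ) :=
    Finset.Icc ⌈a / δ⌉ (⌊b / δ⌋ - 1) ×ˢ Finset.Icc ⌈c / δ⌉ (⌊d / δ⌋ - 1) with hA
  set φ : ℤ × ℤ → ℤ × ℤ × ℤ :=
    fun ij => (ij.1, ij.2, ⌊f ((ij.1 : ℝ) * δ) ((ij.2 : ℝ) * δ) / δ⌋) with hφ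
  have hmem : ∀ ij ∈ A, φ ij ∈ T := by
    rintro ⟨i, j⟩ hij
    simp only [hA, Finset.mem_product, Finset.mem_Icc] at hij
    obtain ⟨⟨hi1, hi2⟩, hj1, hj2⟩ := hij
    set x : ℝ := (i : ℝ) * δ
    set y : ℝ := (j : ℝ) * δ
    set z : ℝ := f x y
    set k : ℤ := ⌊z / δ⌋
    have hxa : a ≤ x := by
      have h1 : a / δ ≤ (⌈a / δ⌉ : ℝ) := Int.le_ceil _
      have h2 : ((⌈a / δ⌉ : ℤ) : ℝ) ≤ (i : ℝ) := by exact_mod_cast hi1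
      rw [show x = (i : ℝ) * δ from rfl, ← div_le_iff₀ hδ]
      linarith
    have hxb : x ≤ b := by
      have h1 : ((i : ℤ) : ℝ) ≤ ((⌊b / δ⌋ - 1 : ℤ) : ℝ) := by exact_mod_cast hi2
      have h2 : (⌊b / δ⌋ : ℝ) ≤ b / δ := Int.floor_le _
      push_cast at h1
      rw [show x = (i : ℝ) * δ from rfl, ← le_div_iff₀ hδ]
      linarith
    have hyc : c ≤ y := by
      have h1 : c / δ ≤ (⌈c / δ⌉ : ℝ) := Int.le_ceil _
      have h2 : ((⌈c / δ⌉ : ℤ) : ℝ) ≤ (j : ℝ) := by exact_mod_cast hj1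
      rw [show y = (j : ℝ) * δ from rfl, ← div_le_iff₀ hδ]
      linarith
    have hyd : y ≤ d := by
      have h1 : ((j : ℤ) : ℝ) ≤ ((⌊d / δ⌋ - 1 : ℤ) : ℝ) := by exact_mod_cast hj2
      have h2 : (⌊d / δ⌋ : ℝ) ≤ d / δ := Int.floor_le _
      push_cast at h1
      rw [show y = (j : ℝ) * δ from rfl, ← le_div_iff₀ hδ]
      linarith
    show (meshCube δ i j k ∩ graphRect a b c d f).Nonempty
    refine ⟨(x, y, z), ⟨?_, ?_, ?_⟩, ⟨hxa, hxb⟩, ⟨hyc, hyd⟩, rfl⟩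
    · refine ⟨le_rfl, ?_⟩
      show (i : ℝ) * δ ≤ ((i : ℝ) + 1) * δ
      nlinarith
    · refine ⟨le_rfl, ?_⟩
      show (j : ℝ) * δ ≤ ((j : ℝ) + 1) * δ
      nlinarith
    · constructor
      · rw [← le_div_iff₀ hδ]
        exact Int.floor_le _
      · rw [← div_le_iff₀ hδ]
        push_cast
        exact (Int.lt_floor_add_one (z / δ)).le
  have hinj : Set.InjOn φ ↑A := by
    rintro ⟨i, j⟩ _ ⟨i', j'⟩ _ h
    simp only [hφ, Prod.mk.injEq] at h
    exact Prod.ext h.1 h.2.1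
  have hsub : φ '' ↑A ⊆ T := by
    rintro _ ⟨ij, hij, rfl⟩
    exact hmem ij hij
  have hcard : (A.card : ℝ) ≤ (meshCount δ (graphRect a b c d f) : ℝ) := by
    have h1 : (φ '' ↑A).ncard = A.card := by
      rw [Set.ncard_image_of_injOn hinj, Set.ncard_coe_finset]
    have h2 : (φ '' ↑A).ncard ≤ T.ncard := Set.ncard_le_ncard hsub hfin
    have h3 : meshCount δ (graphRect a b c d f) = T.ncard := Nat.card_coe_set_eq T
    have : A.card ≤ meshCount δ (graphRect a b c d f) := by
      rw [h3, ← h1]; exact h2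
    exact_mod_cast this
  refine le_trans ?_ hcard
  have hIc : (b - a) / (2 * δ) ≤ ((Finset.Icc ⌈a / δ⌉ (⌊b / δ⌋ - 1)).card : ℝ) := by
    rw [Int.card_Icc]
    refine le_toNat_cast ?_
    push_cast
    have h1 : b / δ - 1 < (⌊b / δ⌋ : ℝ) := Int.sub_one_lt_floor _
    have h2 : (⌈a / δ⌉ : ℝ) < a / δ + 1 := Int.ceil_lt_add_one _
    have h3 : 4 ≤ (b - a) / δ := by
      rw [le_div_iff₀ hδ]; linarith
    have e1 : (b - a) / δ = b / δ - a / δ := by field_simp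
    have e2 : (b - a) / (2 * δ) = (b - a) / δ / 2 := by
      rw [div_div]; ring_nf
    linarith
  have hJc : (d - c) / (2 * δ) ≤ ((Finset.Icc ⌈c / δ⌉ (⌊d / δ⌋ - 1)).card : ℝ) := by
    rw [Int.card_Icc]
    refine le_toNat_cast ?_
    push_cast
    have h1 : d / δ - 1 < (⌊d / δ⌋ : ℝ) := Int.sub_one_lt_floor _
    have h2 : (⌈c / δ⌉ : ℝ) < c / δ + 1 := Int.ceil_lt_add_one _
    have h3 : 4 ≤ (d - c) / δ := by
      rw [le_div_iff₀ hδ]; linarith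
    have e1 : (d - c) / δ = d / δ - c / δ := by field_simp
    have e2 : (d - c) / (2 * δ) = (d - c) / δ / 2 := by
      rw [div_div]; ring_nf
    linarith
  rw [hA, Finset.card_product]
  push_cast
  refine mul_le_mul hIc hJc (div_nonneg (by linarith) (by linarith)) (Nat.cast_nonneg _)

lemma diam_meshCube {δ : ℝ} (hδ : 0 ≤ δ) (i j k : ℤ) :
    EMetric.diam (meshCube δ i j k) ≤ ENNReal.ofReal δ := by
  refine EMetric.diam_le ?_
  rintro ⟨x1, x2, x3⟩ ⟨hx1, hx2, hx3⟩ ⟨y1, y2, y3⟩ ⟨hy1, hy2, hy3⟩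
  have key : ∀ (l : ℤ) (u v : ℝ), u ∈ Icc ((l : ℝ) * δ) (((l : ℝ) + 1) * δ) →
      v ∈ Icc ((l : ℝ) * δ) (((l : ℝ) + 1) * δ) → edist u v ≤ ENNReal.ofReal δ := by
    intro l u v hu hv
    rw [edist_dist, Real.dist_eq]
    refine ENNReal.ofReal_le_ofReal ?_
    rw [abs_sub_le_iff]
    constructor <;> · obtain ⟨h1, h2⟩ := hu; obtain ⟨h3, h4⟩ := hv; nlinarith
  rw [Prod.edist_eq, Prod.edist_eq]
  exact max_le (key i x1 y1 hx1 hy1) (max_le (key j x2 y2 hx2 hy2) (key k x3 y3 hx3 hy3))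

lemma mem_own_cube {δ : ℝ} (hδ : 0 < δ) (p : ℝ × ℝ × ℝ) :
    p ∈ meshCube δ ⌊p.1 / δ⌋ ⌊p.2.1 / δ⌋ ⌊p.2.2 / δ⌋ := by
  have key : ∀ x : ℝ, x ∈ Icc ((⌊x / δ⌋ : ℝ) * δ) ((((⌊x / δ⌋ : ℤ) : ℝ) + 1) * δ) := by
    intro x
    constructor
    · rw [← le_div_iff₀ hδ]
      exact Int.floor_le _
    · rw [← div_le_iff₀ hδ]
      exact (Int.lt_floor_add_one (x / δ)).le
  exact ⟨key p.1, key p.2.1, key p.2.2⟩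


/-- a continuous function of bounded variation in the sense of
Arzelà has graph of box dimension and Hausdorff dimension `2`. -/
theorem dim_graph_continuous_arzelaBV (a b c d : ℝ) (hab : a < b) (hcd : c < d)
    (f : ℝ → ℝ → ℝ)
    (hf : ContinuousOn (fun pt : ℝ × ℝ => f pt.1 pt.2) (Icc a b ×ˢ Icc c d))
    (hbv : ArzelaBV a b c d f) :
    lowerBoxDim (graphRect a b c d f) = 2 ∧
    upperBoxDim (graphRect a b c d f) = 2 ∧
    dimH (graphRect a b c d f) = 2 := by
  classical
  obtain ⟨M, hM0, hMb⟩ := hbv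
  set G : Set (ℝ × ℝ × ℝ) := graphRect a b c d f with hG
  set C2 : ℝ := 2 * M * ((b - a) + (d - c) + 5) + 2 * ((b - a) + 3) * ((d - c) + 3) with hC2
  have hC2pos : 0 < C2 := by nlinarith
  set c1 : ℝ := (b - a) * (d - c) / 4 with hc1
  have hc1pos : 0 < c1 := div_pos (mul_pos (by linarith) (by linarith)) (by norm_num)
  set ε : ℝ := min 1 (min ((b - a) / 4) ((d - c) / 4)) with hε
  have hεpos : 0 < ε := lt_min one_pos (lt_min (by linarith) (by linarith))
  have hε1 : ε ≤ 1 := min_le_left _ _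
  -- the two-sided counting bound
  have key : ∀ δ : ℝ, δ ∈ Ioo (0 : ℝ) ε →
      {p : ℤ × ℤ × ℤ | (meshCube δ p.1 p.2.1 p.2.2 ∩ G).Nonempty}.Finite ∧
      c1 / δ ^ 2 ≤ (meshCount δ G : ℝ) ∧ (meshCount δ G : ℝ) ≤ C2 / δ ^ 2 := by
    rintro δ ⟨hδ0, hδε⟩
    have hδ1 : δ ≤ 1 := le_of_lt (lt_of_lt_of_le hδε (min_le_left _ _))
    have h4a : 4 * δ ≤ b - a := by
      have := hδε.trans_le ((min_le_right _ _).trans (min_le_left _ _))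
      linarith
    have h4c : 4 * δ ≤ d - c := by
      have := hδε.trans_le ((min_le_right _ _).trans (min_le_right _ _))
      linarith
    obtain ⟨hfin, hupper⟩ := count_upper hab hcd hMb hM0 hf hδ0 hδ1
    have hlower := count_lower hab hcd f hδ0 h4a h4c hfin
    refine ⟨hfin, ?_, hupper⟩
    calc c1 / δ ^ 2 = ((b - a) / (2 * δ)) * ((d - c) / (2 * δ)) := by
          rw [hc1]; ring
      _ ≤ _ := hlower
  -- the main limit
  have htend : Tendsto (fun δ : ℝ => Real.log (meshCount δ G : ℕ) / (-Real.log δ))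
      (nhdsWithin (0 : ℝ) (Ioi 0)) (nhds 2) := by
    set ε' : ℝ := min ε (1 / 2) with hε'
    have hε'pos : 0 < ε' := lt_min hεpos (by norm_num)
    have hbound : ∀ δ ∈ Ioo (0 : ℝ) ε',
        2 + Real.log c1 / (-Real.log δ) ≤ Real.log (meshCount δ G : ℕ) / (-Real.log δ) ∧
        Real.log (meshCount δ G : ℕ) / (-Real.log δ) ≤ 2 + Real.log C2 / (-Real.log δ) := by
      rintro δ ⟨hδ0, hδε'⟩
      have hδε : δ < ε := lt_of_lt_of_le hδε' (min_le_left _ _)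
      obtain ⟨_, hlo, hup⟩ := key δ ⟨hδ0, hδε⟩
      have hδhalf : δ < 1 := lt_of_lt_of_le (hδε'.trans_le (min_le_right _ _)) (by norm_num)
      have hlogδ : 0 < -Real.log δ := by
        have := Real.log_neg hδ0 hδhalf
        linarith
      have hδ2pos' : (0 : ℝ) < δ ^ 2 := by positivity
      have hNpos : (0 : ℝ) < (meshCount δ G : ℝ) :=
        lt_of_lt_of_le (div_pos hc1pos hδ2pos') hlo
      have hδ2pos : (0 : ℝ) < δ ^ 2 := by positivity
      have hlogup : Real.log (meshCount δ G : ℕ) ≤ Real.log C2 - 2 * Real.log δ := by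
        have h1 : Real.log (meshCount δ G : ℕ) ≤ Real.log (C2 / δ ^ 2) :=
          Real.log_le_log hNpos hup
        rw [Real.log_div hC2pos.ne' (ne_of_gt hδ2pos), Real.log_pow] at h1
        push_cast at h1
        linarith
      have hloglo : Real.log c1 - 2 * Real.log δ ≤ Real.log (meshCount δ G : ℕ) := by
        have h1 : Real.log (c1 / δ ^ 2) ≤ Real.log (meshCount δ G : ℕ) :=
          Real.log_le_log (div_pos hc1pos hδ2pos) hlo
        rw [Real.log_div hc1pos.ne' (ne_of_gt hδ2pos), Real.log_pow] at h1
        push_cast at h1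
        linarith
      have hne : Real.log δ ≠ 0 := ne_of_lt (by linarith)
      have e : ∀ w : ℝ, (w - 2 * Real.log δ) / (-Real.log δ) = 2 + w / (-Real.log δ) := by
        intro w
        rw [div_neg, div_neg, sub_div, mul_div_assoc, div_self hne, mul_one]
        ring
      constructor
      · rw [← e (Real.log c1)]
        exact (div_le_div_iff_of_pos_right hlogδ).mpr hloglo
      · rw [← e (Real.log C2)]
        exact (div_le_div_iff_of_pos_right hlogδ).mpr hlogup
    have hatTop : Tendsto (fun δ : ℝ => -Real.log δ) (nhdsWithin (0 : ℝ) (Ioi 0)) atTop :=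
      tendsto_neg_atBot_atTop.comp Real.tendsto_log_nhdsGT_zero
    have hlim : ∀ w : ℝ, Tendsto (fun δ : ℝ => 2 + w / (-Real.log δ))
        (nhdsWithin (0 : ℝ) (Ioi 0)) (nhds 2) := by
      intro w
      have h1 : Tendsto (fun δ : ℝ => w / (-Real.log δ)) (nhdsWithin (0 : ℝ) (Ioi 0)) (nhds 0) :=
        Tendsto.div_atTop tendsto_const_nhds hatTop
      have := (tendsto_const_nhds (x := (2 : ℝ)) (f := nhdsWithin (0:ℝ) (Ioi 0))).add h1
      simpa using this
    have hmem : Ioo (0 : ℝ) ε' ∈ nhdsWithin (0 : ℝ) (Ioi 0) :=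
      Ioo_mem_nhdsGT_of_mem ⟨le_refl 0, hε'pos⟩
    refine tendsto_of_tendsto_of_tendsto_of_le_of_le' (hlim (Real.log c1)) (hlim (Real.log C2))
      ?_ ?_
    · filter_upwards [hmem] with δ hδ using (hbound δ hδ).1
    · filter_upwards [hmem] with δ hδ using (hbound δ hδ).2
  have hliminf : lowerBoxDim G = 2 := htend.liminf_eq
  have hlimsup : upperBoxDim G = 2 := htend.limsup_eq
  -- Hausdorff dimension: lower bound
  have hproj : LipschitzWith 1 (fun p : ℝ × ℝ × ℝ => (p.1, p.2.1)) := by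
    have := (LipschitzWith.prod_fst (α := ℝ) (β := ℝ × ℝ)).prodMk
      ((LipschitzWith.prod_fst (α := ℝ) (β := ℝ)).comp
        (LipschitzWith.prod_snd (α := ℝ) (β := ℝ × ℝ)))
    simpa using this
  have himg : (fun p : ℝ × ℝ × ℝ => (p.1, p.2.1)) '' G = Icc a b ×ˢ Icc c d := by
    ext w
    constructor
    · rintro ⟨q, hq, rfl⟩
      exact ⟨hq.1, hq.2.1⟩
    · intro hw
      exact ⟨(w.1, w.2, f w.1 w.2), ⟨hw.1, hw.2, rfl⟩, Prod.mk.eta⟩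
  have hrectdim : dimH (Icc a b ×ˢ Icc c d : Set (ℝ × ℝ)) = 2 := by
    rw [Real.dimH_of_nonempty_interior]
    · norm_num
    · rw [interior_prod_eq, interior_Icc, interior_Icc]
      exact (nonempty_Ioo.mpr hab).prod (nonempty_Ioo.mpr hcd)
  have h2le : (2 : ENNReal) ≤ dimH G := by
    rw [← hrectdim, ← himg]
    exact hproj.dimH_image_le G
  -- Hausdorff dimension: upper bound
  have hdimle : dimH G ≤ 2 := by
    refine dimH_le fun s' hs' => ?_
    by_contra hgt
    push_neg at hgt
    have hp2 : (2 : ℝ) < (s' : ℝ) := by exact_mod_cast hgt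
    set p : ℝ := (s' : ℝ) with hp
    set dn : ℕ → ℝ := fun n => ε / (n + 2) with hdn
    have hdnpos : ∀ n, 0 < dn n := fun n => div_pos hεpos (by positivity)
    have hdnle1 : ∀ n, dn n ≤ 1 := by
      intro n
      rw [hdn]
      have h1 : ε / ((n : ℝ) + 2) ≤ ε / 2 :=
        div_le_div_of_nonneg_left hεpos.le (by norm_num) (by push_cast; linarith)
      linarith [hε1]
    have hdn0 : Tendsto dn atTop (nhds 0) := by
      apply Tendsto.div_atTop (tendsto_const_nhds)
      exact tendsto_atTop_add_const_right _ 2 tendsto_natCast_atTop_atTop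
    have hcu := fun n => count_upper hab hcd hMb hM0 hf (hdnpos n) (hdnle1 n)
    set Tn : ℕ → Set (ℤ × ℤ × ℤ) := fun n =>
      {q : ℤ × ℤ × ℤ | (meshCube (dn n) q.1 q.2.1 q.2.2 ∩ G).Nonempty} with hTn
    have hfin : ∀ n, (Tn n).Finite := fun n => (hcu n).1
    letI : ∀ n, Fintype ↥(Tn n) := fun n => (hfin n).fintype
    set t : ∀ n : ℕ, ↥(Tn n) → Set (ℝ × ℝ × ℝ) :=
      fun n i => meshCube (dn n) i.1.1 i.1.2.1 i.1.2.2 with ht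
    set r : ℕ → ENNReal := fun n => ENNReal.ofReal (dn n) with hr
    have hrt : Tendsto r atTop (nhds 0) := by
      have := ENNReal.tendsto_ofReal hdn0
      simpa using this
    have hdiam : ∀ n, ∀ i : ↥(Tn n), EMetric.diam (t n i) ≤ r n :=
      fun n i => diam_meshCube (hdnpos n).le _ _ _
    have hcover : ∀ n, G ⊆ ⋃ i : ↥(Tn n), t n i := by
      intro n g hg
      have hm : (⌊g.1 / dn n⌋, ⌊g.2.1 / dn n⌋, ⌊g.2.2 / dn n⌋) ∈ Tn n :=
        ⟨g, mem_own_cube (hdnpos n) g, hg⟩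
      exact mem_iUnion.mpr ⟨⟨_, hm⟩, mem_own_cube (hdnpos n) g⟩
    have hmle := Measure.hausdorffMeasure_le_liminf_sum p G r hrt t
      (Eventually.of_forall hdiam) (Eventually.of_forall hcover)
    have hsum_le : ∀ n, (∑ i : ↥(Tn n), EMetric.diam (t n i) ^ p)
        ≤ ENNReal.ofReal (C2 * (dn n) ^ (p - 2)) := by
      intro n
      have hterm : ∀ i : ↥(Tn n), EMetric.diam (t n i) ^ p ≤ (ENNReal.ofReal (dn n)) ^ p :=
        fun i => ENNReal.rpow_le_rpow (hdiam n i) (by linarith)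
      have hcard : ((Fintype.card ↥(Tn n) : ℕ) : ℝ) = (meshCount (dn n) G : ℝ) := by
        congr 1
        rw [← Nat.card_eq_fintype_card]
        rfl
      calc ∑ i : ↥(Tn n), EMetric.diam (t n i) ^ p
          ≤ ∑ _i : ↥(Tn n), (ENNReal.ofReal (dn n)) ^ p :=
            Finset.sum_le_sum fun i _ => hterm i
        _ = (Fintype.card ↥(Tn n)) * (ENNReal.ofReal (dn n)) ^ p := by
            rw [Finset.sum_const, Finset.card_univ, nsmul_eq_mul]
        _ = ENNReal.ofReal ((Fintype.card ↥(Tn n) : ℝ)) * ENNReal.ofReal ((dn n) ^ p) := by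
            rw [ENNReal.ofReal_rpow_of_pos (hdnpos n), ENNReal.ofReal_natCast]
        _ = ENNReal.ofReal ((Fintype.card ↥(Tn n) : ℝ) * (dn n) ^ p) := by
            rw [ENNReal.ofReal_mul (Nat.cast_nonneg _)]
        _ ≤ ENNReal.ofReal (C2 / (dn n) ^ 2 * (dn n) ^ p) := by
            refine ENNReal.ofReal_le_ofReal ?_
            refine mul_le_mul_of_nonneg_right ?_ (Real.rpow_nonneg (hdnpos n).le _)
            rw [hcard]
            exact (hcu n).2
        _ = ENNReal.ofReal (C2 * (dn n) ^ (p - 2)) := by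
            congr 1
            have e1 : (dn n) ^ p = (dn n) ^ (2 : ℝ) * (dn n) ^ (p - 2) := by
              rw [← Real.rpow_add (hdnpos n)]
              norm_num
            have e2 : (dn n) ^ (2 : ℝ) = (dn n) ^ (2 : ℕ) := by
              rw [← Real.rpow_natCast]
              norm_num
            rw [e1, e2]
            have hne : (dn n) ^ 2 ≠ 0 := by positivity
            rw [div_mul_eq_mul_div, mul_left_comm, mul_div_cancel_left₀ _ hne]
    have hB : Tendsto (fun n => ENNReal.ofReal (C2 * (dn n) ^ (p - 2))) atTop (nhds 0) := by
      have h1 : Tendsto (fun n => (dn n) ^ (p - 2)) atTop (nhds 0) := by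
        have hc := Real.continuousAt_rpow_const 0 (p - 2) (Or.inr (by linarith))
        have h2 := hc.tendsto.comp hdn0
        rw [Real.zero_rpow (by linarith : p - 2 ≠ 0)] at h2
        exact h2
      have h3 : Tendsto (fun n => C2 * (dn n) ^ (p - 2)) atTop (nhds 0) := by
        have := h1.const_mul C2
        simpa using this
      have := ENNReal.tendsto_ofReal h3
      simpa using this
    have hliminf_le : liminf (fun n => ∑ i : ↥(Tn n), EMetric.diam (t n i) ^ p) atTop
        ≤ (0 : ENNReal) := by
      have h1 := liminf_le_liminf (Eventually.of_forall hsum_le)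
        (f := atTop)
      rw [hB.liminf_eq] at h1
      exact h1
    have hzero : μH[p] G = 0 := le_zero_iff.mp (hmle.trans hliminf_le)
    rw [hp] at hzero
    rw [hzero] at hs'
    exact ENNReal.zero_ne_top hs'
  exact ⟨hliminf, hlimsup, le_antisymm hdimle h2le⟩
end
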